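/- arXiv:2001.02425 — 7 statements merged into one kernel-verified Lean document; each statement's English description precedes it below -/
import Mathlib

section
/- Fix an integer L ≥ 2, an integer n with 0 ≤ n ≤ L−1, and real parameters p, q. Let σ : ZMod L → {0,1,2} be any configuration having exactly one site t with σ(t) = 2 and exactly n sites with value 1 (all other sites having value 0). Then the stationary weight W satisfies the master equation: ∑_{i ∈ ZMod L} r(σ(i+1), σ(i)) · W(σ^{(i)}) = W(σ) · ∑_{i ∈ ZMod L} r(σ(i), σ(i+1)), where σ^{(i)} denotes the configuration obtained from σ by exchanging the values at sites i and i+1. -/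
open Finset

/-- The jump rate function: `r(1,0) = 1`, `r(0,1) = 1`, `r(2,0) = p`, `r(0,2) = q`,
and `r(b,c) = 0` for all other pairs.  Here `2` denotes the tracer particle, `1` an
ordinary particle and `0` a vacancy. -/
noncomputable def rate (p q : ℝ) (b c : Fin 3) : ℝ :=
  if b = 1 ∧ c = 0 then 1
  else if b = 0 ∧ c = 1 then 1
  else if b = 2 ∧ c = 0 then p
  else if b = 0 ∧ c = 2 then q
  else 0

/-- The stationary weight of a configuration `σ` relative to a tracer site `t`:
`∏_{i=1}^{L-1, σ(t+i)=0} (1 + p·#{j : 1 ≤ j < i, σ(t+j) = 1} + q·#{j : i < j ≤ L-1, σ(t+j) = 1})`. -/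
noncomputable def Wloc (p q : ℝ) (L : ℕ) (σ : ZMod L → Fin 3) (t : ZMod L) : ℝ :=
  ∏ i ∈ (Finset.Ico 1 L).filter (fun i : ℕ => σ (t + (i : ZMod L)) = 0),
    (1 + p * (((Finset.Ico 1 i).filter (fun j : ℕ => σ (t + (j : ZMod L)) = 1)).card : ℝ)
       + q * (((Finset.Ico (i + 1) L).filter (fun j : ℕ => σ (t + (j : ZMod L)) = 1)).card : ℝ))

/-- The stationary weight of a configuration: for an admissible configuration (exactly one
tracer site), this is `Wloc` evaluated at the unique site `t` with `σ t = 2`. -/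
noncomputable def W (p q : ℝ) (L : ℕ) [NeZero L] (σ : ZMod L → Fin 3) : ℝ :=
  ∑ t ∈ univ.filter (fun t : ZMod L => σ t = 2), Wloc p q L σ t

/-- The configuration `σ^{(i)}` obtained from `σ` by exchanging the values at sites
`i` and `i + 1`. -/
def swapAt {L : ℕ} (σ : ZMod L → Fin 3) (i : ZMod L) : ZMod L → Fin 3 :=
  fun x => if x = i then σ (i + 1) else if x = i + 1 then σ i else σ x


def Sw (L : ℕ) (w : ℕ → Fin 3) : Finset ℕ := (Finset.Ico 1 L).filter (fun i => w i = 0)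

noncomputable def fw (p q : ℝ) (L : ℕ) (w : ℕ → Fin 3) (i : ℕ) : ℝ :=
  1 + p * (((Finset.Ico 1 i).filter (fun j => w j = 1)).card : ℝ)
    + q * (((Finset.Ico (i + 1) L).filter (fun j => w j = 1)).card : ℝ)

noncomputable def Ww (p q : ℝ) (L : ℕ) (w : ℕ → Fin 3) : ℝ :=
  ∏ i ∈ Sw L w, fw p q L w i

noncomputable def Rw (p q : ℝ) (L : ℕ) (w : ℕ → Fin 3) (v : ℕ) : ℝ :=
  ∏ i ∈ (Sw L w).erase v, fw p q L w i

lemma fw_congr (p q : ℝ) (L : ℕ) (w w' : ℕ → Fin 3)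
    (h : ∀ j, 1 ≤ j → j < L → w j = w' j) (i : ℕ) (hi : i ≤ L) :
    fw p q L w i = fw p q L w' i := by
  have e1 : (Finset.Ico 1 i).filter (fun j => w j = 1)
      = (Finset.Ico 1 i).filter (fun j => w' j = 1) := by
    apply Finset.filter_congr; intro j hj
    simp only [mem_Ico] at hj
    rw [h j hj.1 (by omega)]
  have e2 : (Finset.Ico (i+1) L).filter (fun j => w j = 1)
      = (Finset.Ico (i+1) L).filter (fun j => w' j = 1) := by
    apply Finset.filter_congr; intro j hj
    simp only [mem_Ico] at hj
    rw [h j (by omega) hj.2]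
  unfold fw; rw [e1, e2]

lemma Sw_congr (L : ℕ) (w w' : ℕ → Fin 3)
    (h : ∀ j, 1 ≤ j → j < L → w j = w' j) : Sw L w = Sw L w' := by
  unfold Sw
  apply Finset.filter_congr
  intro j hj
  simp only [mem_Ico] at hj
  rw [h j hj.1 hj.2]

lemma Ww_congr (p q : ℝ) (L : ℕ) (w w' : ℕ → Fin 3)
    (h : ∀ j, 1 ≤ j → j < L → w j = w' j) : Ww p q L w = Ww p q L w' := by
  unfold Ww
  rw [Sw_congr L w w' h]
  apply Finset.prod_congr rfl
  intro i hi
  simp only [Sw, mem_filter, mem_Ico] at hi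
  exact fw_congr p q L w w' h i (by omega)

lemma fw_adj (p q : ℝ) (L : ℕ) (w : ℕ → Fin 3) (v : ℕ) (hv1 : 1 ≤ v) (hvL : v + 1 < L)
    (h0 : w v = 0) (h1 : w (v + 1) = 0) : fw p q L w v = fw p q L w (v + 1) := by
  have e1 : (Finset.Ico 1 (v+1)).filter (fun j => w j = 1)
      = (Finset.Ico 1 v).filter (fun j => w j = 1) := by
    rw [Nat.Ico_succ_right_eq_insert_Ico hv1, filter_insert]
    simp [h0]
  have e2 : (Finset.Ico (v+1) L).filter (fun j => w j = 1)
      = (Finset.Ico (v+1+1) L).filter (fun j => w j = 1) := by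
    rw [← Finset.insert_Ico_add_one_left_eq_Ico hvL, filter_insert]
    simp [h1]
  unfold fw; rw [e1, e2]

lemma Rw_adj (p q : ℝ) (L : ℕ) (w : ℕ → Fin 3) (v : ℕ)
    (hv : v ∈ Sw L w) (hv' : v + 1 ∈ Sw L w) : Rw p q L w v = Rw p q L w (v + 1) := by
  have hv2 : (1 ≤ v ∧ v < L) ∧ w v = 0 := by simpa [Sw, mem_filter, mem_Ico] using hv
  have hv'2 : (1 ≤ v + 1 ∧ v + 1 < L) ∧ w (v + 1) = 0 := by
    simpa [Sw, mem_filter, mem_Ico] using hv'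
  have hadj := fw_adj p q L w v hv2.1.1 hv'2.1.2 hv2.2 hv'2.2
  have m1 : v + 1 ∈ (Sw L w).erase v := by
    simp only [mem_erase]; exact ⟨by omega, hv'⟩
  have m2 : v ∈ (Sw L w).erase (v + 1) := by
    simp only [mem_erase]; exact ⟨by omega, hv⟩
  unfold Rw
  rw [← Finset.mul_prod_erase _ _ m1, ← Finset.mul_prod_erase _ _ m2,
    Finset.erase_right_comm, hadj]

lemma key (p q : ℝ) (L : ℕ) (w : ℕ → Fin 3) :
    ∑ v ∈ (Sw L w).filter (fun v => v - 1 ∉ Sw L w), Rw p q L w v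
      = ∑ v ∈ (Sw L w).filter (fun v => v + 1 ∉ Sw L w), Rw p q L w v := by
  have h1 := Finset.sum_filter_add_sum_filter_not (Sw L w) (fun v => v - 1 ∈ Sw L w)
      (fun v => Rw p q L w v)
  have h2 := Finset.sum_filter_add_sum_filter_not (Sw L w) (fun v => v + 1 ∈ Sw L w)
      (fun v => Rw p q L w v)
  have h3 : ∑ v ∈ (Sw L w).filter (fun v => v + 1 ∈ Sw L w), Rw p q L w v
      = ∑ v ∈ (Sw L w).filter (fun v => v - 1 ∈ Sw L w), Rw p q L w v := by
    apply Finset.sum_nbij' (fun v => v + 1) (fun v => v - 1)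
    · intro a ha
      simp only [mem_filter] at ha ⊢
      refine ⟨ha.2, ?_⟩
      simpa [Nat.add_sub_cancel] using ha.1
    · intro a ha
      simp only [mem_filter] at ha ⊢
      have h2a : 1 ≤ a := by
        have := ha.2; simp only [Sw, mem_filter, mem_Ico] at this; omega
      refine ⟨ha.2, ?_⟩
      rw [Nat.sub_add_cancel h2a]; exact ha.1
    · intro a _; omega
    · intro a ha
      simp only [mem_filter] at ha
      have : 1 ≤ a := by
        have := ha.1; simp only [Sw, mem_filter, mem_Ico] at this; omega
      omega
    · intro a ha
      simp only [mem_filter] at ha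
      exact Rw_adj p q L w a ha.1 ha.2
  linarith


def swapW (w : ℕ → Fin 3) (k : ℕ) : ℕ → Fin 3 :=
  fun j => if j = k then w (k + 1) else if j = k + 1 then w k else w j

lemma card_filter_swap {k l : ℕ} {s : Finset ℕ} (hk : k ∈ s) (hl : l ∈ s) (hne : k ≠ l)
    {w w' : ℕ → Fin 3} (hwk : w' k = w l) (hwl : w' l = w k)
    (hother : ∀ x ∈ s, x ≠ k → x ≠ l → w' x = w x) :
    (s.filter (fun j => w' j = 1)).card = (s.filter (fun j => w j = 1)).card := by
  rw [Finset.card_filter, Finset.card_filter]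
  have hl' : l ∈ s.erase k := Finset.mem_erase.mpr ⟨hne.symm, hl⟩
  rw [← Finset.add_sum_erase s _ hk, ← Finset.add_sum_erase (s.erase k) _ hl',
    ← Finset.add_sum_erase s (fun j => if w j = 1 then 1 else 0) hk,
    ← Finset.add_sum_erase (s.erase k) (fun j => if w j = 1 then 1 else 0) hl']
  have htail : ∑ x ∈ (s.erase k).erase l, (if w' x = 1 then 1 else 0)
      = ∑ x ∈ (s.erase k).erase l, (if w x = 1 then 1 else 0) := by
    apply Finset.sum_congr rfl
    intro x hx
    simp only [Finset.mem_erase] at hx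
    rw [hother x hx.2.2 hx.2.1 hx.1]
  rw [htail, hwk, hwl]
  omega

lemma swapW_apply_other (w : ℕ → Fin 3) (k j : ℕ) (h1 : j ≠ k) (h2 : j ≠ k + 1) :
    swapW w k j = w j := by simp [swapW, h1, h2]

lemma fw_swap_other (p q : ℝ) (L : ℕ) (w : ℕ → Fin 3) (k j : ℕ)
    (hk : 1 ≤ k) (hkL : k + 1 < L) (hj1 : 1 ≤ j) (hjL : j < L)
    (hjk : j ≠ k) (hjk1 : j ≠ k + 1) :
    fw p q L (swapW w k) j = fw p q L w j := by
  have hsk : swapW w k k = w (k+1) := by simp [swapW]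
  have hsk1 : swapW w k (k+1) = w k := by simp [swapW]
  have e1 : ((Finset.Ico 1 j).filter (fun i => swapW w k i = 1)).card
      = ((Finset.Ico 1 j).filter (fun i => w i = 1)).card := by
    rcases Nat.lt_or_ge j k with hc | hc
    · -- j < k : positions k, k+1 outside Ico 1 j
      congr 1
      apply Finset.filter_congr
      intro x hx
      simp only [mem_Ico] at hx
      rw [swapW_apply_other w k x (by omega) (by omega)]
    · -- j > k+1 : both inside
      have hj2 : k + 1 < j := by omega
      exact card_filter_swap (Finset.mem_Ico.mpr ⟨hk, by omega⟩)
        (Finset.mem_Ico.mpr ⟨by omega, hj2⟩) (by omega) hsk hsk1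
        (fun x _ hx1 hx2 => swapW_apply_other w k x hx1 hx2)
  have e2 : ((Finset.Ico (j+1) L).filter (fun i => swapW w k i = 1)).card
      = ((Finset.Ico (j+1) L).filter (fun i => w i = 1)).card := by
    rcases Nat.lt_or_ge j k with hc | hc
    · exact card_filter_swap (Finset.mem_Ico.mpr ⟨by omega, by omega⟩)
        (Finset.mem_Ico.mpr ⟨by omega, hkL⟩) (by omega) hsk hsk1
        (fun x _ hx1 hx2 => swapW_apply_other w k x hx1 hx2)
    · have hj2 : k + 1 < j := by omega
      congr 1
      apply Finset.filter_congr
      intro x hx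
      simp only [mem_Ico] at hx
      rw [swapW_apply_other w k x (by omega) (by omega)]
  unfold fw
  rw [e1, e2]

lemma Sw_swap10 (L : ℕ) (w : ℕ → Fin 3) (k : ℕ) (hk : 1 ≤ k) (hkL : k + 1 < L)
    (h1 : w k = 1) (h0 : w (k + 1) = 0) :
    Sw L (swapW w k) = insert k ((Sw L w).erase (k + 1)) := by
  ext j
  simp only [Sw, mem_filter, mem_Ico, mem_insert, mem_erase]
  by_cases hjk : j = k
  · subst hjk
    simp [swapW, h0, hk]
    omega
  · by_cases hjk1 : j = k + 1
    · subst hjk1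
      simp [swapW, h1, hjk]
    · rw [swapW_apply_other w k j hjk hjk1]
      tauto

lemma fw_swap10_at (p q : ℝ) (L : ℕ) (w : ℕ → Fin 3) (k : ℕ) (hk : 1 ≤ k) (hkL : k + 1 < L)
    (h1 : w k = 1) (h0 : w (k + 1) = 0) :
    fw p q L (swapW w k) k = fw p q L w (k + 1) + q - p := by
  have ea : ((Finset.Ico 1 k).filter (fun j => swapW w k j = 1)).card
      = ((Finset.Ico 1 k).filter (fun j => w j = 1)).card := by
    congr 1
    apply Finset.filter_congr
    intro x hx
    simp only [mem_Ico] at hx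
    rw [swapW_apply_other w k x (by omega) (by omega)]
  have eA : ((Finset.Ico 1 (k+1)).filter (fun j => w j = 1)).card
      = ((Finset.Ico 1 k).filter (fun j => w j = 1)).card + 1 := by
    rw [Nat.Ico_succ_right_eq_insert_Ico hk, filter_insert]
    simp [h1]
  have eb : ((Finset.Ico (k+2) L).filter (fun j => swapW w k j = 1)).card
      = ((Finset.Ico (k+2) L).filter (fun j => w j = 1)).card := by
    congr 1
    apply Finset.filter_congr
    intro x hx
    simp only [mem_Ico] at hx
    rw [swapW_apply_other w k x (by omega) (by omega)]
  have eB : ((Finset.Ico (k+1) L).filter (fun j => swapW w k j = 1)).card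
      = ((Finset.Ico (k+2) L).filter (fun j => w j = 1)).card + 1 := by
    have h' : swapW w k (k+1) = 1 := by simp [swapW, h1]
    rw [← Finset.insert_Ico_add_one_left_eq_Ico hkL, filter_insert, if_pos h',
      Finset.card_insert_of_notMem (by simp), show k + 1 + 1 = k + 2 from rfl, eb]
  unfold fw
  rw [ea, eA, eB]
  push_cast
  ring

lemma swap10 (p q : ℝ) (L : ℕ) (w : ℕ → Fin 3) (k : ℕ) (hk : 1 ≤ k) (hkL : k + 1 < L)
    (h1 : w k = 1) (h0 : w (k + 1) = 0) :
    Ww p q L (swapW w k) = (fw p q L w (k + 1) + q - p) * Rw p q L w (k + 1) ∧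
      Ww p q L w = fw p q L w (k + 1) * Rw p q L w (k + 1) := by
  have hmem : k + 1 ∈ Sw L w := by
    simp only [Sw, mem_filter, mem_Ico]; exact ⟨⟨by omega, hkL⟩, h0⟩
  have hknot : k ∉ (Sw L w).erase (k + 1) := by
    simp only [mem_erase, Sw, mem_filter, mem_Ico, h1]
    rintro ⟨-, -, h⟩
    exact absurd h (by simp [h1])
  constructor
  · unfold Ww
    rw [Sw_swap10 L w k hk hkL h1 h0, Finset.prod_insert hknot,
      fw_swap10_at p q L w k hk hkL h1 h0]
    congr 1
    apply Finset.prod_congr rfl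
    intro j hj
    simp only [mem_erase, Sw, mem_filter, mem_Ico] at hj
    have hjk : j ≠ k := by
      intro h; rw [h] at hj; rw [h1] at hj; exact absurd hj.2.2 (by simp)
    exact fw_swap_other p q L w k j hk hkL hj.2.1.1 hj.2.1.2 hjk hj.1
  · exact (Finset.mul_prod_erase (Sw L w) _ hmem).symm

lemma swapW_involutive (w : ℕ → Fin 3) (k : ℕ) : swapW (swapW w k) k = w := by
  funext j
  by_cases hj : j = k
  · subst hj; simp [swapW]
  · by_cases hj1 : j = k + 1
    · subst hj1; simp [swapW]
    · simp [swapW, hj, hj1]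

lemma swap01 (p q : ℝ) (L : ℕ) (w : ℕ → Fin 3) (k : ℕ) (hk : 1 ≤ k) (hkL : k + 1 < L)
    (h0 : w k = 0) (h1 : w (k + 1) = 1) :
    Ww p q L (swapW w k) = (fw p q L w k + p - q) * Rw p q L w k ∧
      Ww p q L w = fw p q L w k * Rw p q L w k := by
  set w' := swapW w k with hw'
  have hw'k : w' k = 1 := by simp [hw', swapW, h1]
  have hw'k1 : w' (k + 1) = 0 := by simp [hw', swapW, h0]
  have hback : swapW w' k = w := swapW_involutive w k
  obtain ⟨H1, H2⟩ := swap10 p q L w' k hk hkL hw'k hw'k1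
  rw [hback] at H1
  -- fw w' (k+1) = fw w k - q + p
  have hf : fw p q L w k = fw p q L w' (k + 1) + q - p := by
    rw [← fw_swap10_at p q L w' k hk hkL hw'k hw'k1, hback]
  -- Sw L w = insert k ((Sw L w').erase (k+1))
  have hS : Sw L w = insert k ((Sw L w').erase (k + 1)) := by
    rw [← hback]; exact Sw_swap10 L w' k hk hkL hw'k hw'k1
  have hknot : k ∉ (Sw L w').erase (k + 1) := by
    simp only [mem_erase, Sw, mem_filter, mem_Ico, hw'k]
    rintro ⟨-, -, h⟩
    exact absurd h (by simp [hw'k])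
  have hR : Rw p q L w' (k + 1) = Rw p q L w k := by
    unfold Rw
    have hE : (Sw L w).erase k = (Sw L w').erase (k + 1) := by
      rw [hS, Finset.erase_insert hknot]
    rw [hE]
    apply Finset.prod_congr rfl
    intro j hj
    simp only [mem_erase, Sw, mem_filter, mem_Ico] at hj
    have hjk : j ≠ k := by
      intro h; rw [h] at hj; rw [hw'k] at hj; exact absurd hj.2.2 (by simp)
    rw [← hback]
    exact (fw_swap_other p q L w' k j hk hkL hj.2.1.1 hj.2.1.2 hjk hj.1).symm
  constructor
  · rw [H2, hR, hf]; ring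
  · rw [H1, hR, hf]


lemma card_shift (a b : ℕ) (u w : ℕ → Fin 3) (h : ∀ j, a ≤ j → j < b → u j = w (j + 1)) :
    ((Finset.Ico a b).filter (fun j => u j = 1)).card
      = ((Finset.Ico (a + 1) (b + 1)).filter (fun j => w j = 1)).card := by
  refine Finset.card_bij' (fun j _ => j + 1) (fun j _ => j - 1) ?hi ?hj ?li ?ri
  case hi =>
    intro x hx
    simp only [mem_filter, mem_Ico] at hx ⊢
    exact ⟨⟨by omega, by omega⟩, by rw [← h x hx.1.1 hx.1.2]; exact hx.2⟩
  case hj =>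
    intro x hx
    simp only [mem_filter, mem_Ico] at hx ⊢
    refine ⟨⟨by omega, by omega⟩, ?_⟩
    rw [h (x - 1) (by omega) (by omega), Nat.sub_add_cancel (by omega)]
    exact hx.2
  case li => intro x hx; simp
  case ri =>
    intro x hx
    simp only [mem_filter, mem_Ico] at hx
    beta_reduce
    omega

lemma shiftL (p q : ℝ) (L : ℕ) (hL : 2 ≤ L) (w u : ℕ → Fin 3)
    (h1 : w 1 = 0)
    (hu : ∀ j, 1 ≤ j → j + 1 < L → u j = w (j + 1)) (huL : u (L - 1) = 0) :
    Ww p q L u = (1 + p * (((Finset.Ico 1 L).filter (fun j => w j = 1)).card : ℝ)) *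
        Rw p q L w 1 ∧
      Ww p q L w = (1 + q * (((Finset.Ico 1 L).filter (fun j => w j = 1)).card : ℝ)) *
        Rw p q L w 1 := by
  obtain ⟨M, rfl⟩ : ∃ M, L = M + 1 := ⟨L - 1, by omega⟩
  have hM : 1 ≤ M := by omega
  simp only [Nat.add_sub_cancel] at huL
  -- N = number of particles, in two forms
  have hN : ((Finset.Ico 1 (M + 1)).filter (fun j => w j = 1)).card
      = ((Finset.Ico 2 (M + 1)).filter (fun j => w j = 1)).card := by
    rw [← Finset.insert_Ico_add_one_left_eq_Ico (by omega : 1 < M + 1), filter_insert]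
    simp [h1]
  constructor
  · -- weight of the shifted word u
    have hmemu : M ∈ Sw (M + 1) u := by
      simp only [Sw, mem_filter, mem_Ico]; exact ⟨⟨hM, by omega⟩, huL⟩
    rw [Ww, ← Finset.mul_prod_erase _ _ hmemu]
    have hfM : fw p q (M + 1) u M
        = 1 + p * (((Finset.Ico 1 (M + 1)).filter (fun j => w j = 1)).card : ℝ) := by
      unfold fw
      rw [card_shift 1 M u w (fun j hj1 hj2 => hu j hj1 (by omega)), ← hN]
      simp [Finset.Ico_self]
    rw [hfM]
    congr 1
    -- product over remaining vacancies
    refine Finset.prod_nbij' (fun i => i + 1) (fun i => i - 1) ?_ ?_ ?_ ?_ ?_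
    · intro x hx
      simp only [mem_erase, Sw, mem_filter, mem_Ico] at hx ⊢
      refine ⟨by omega, ⟨by omega, by omega⟩, ?_⟩
      rw [← hu x hx.2.1.1 (by omega)]
      exact hx.2.2
    · intro x hx
      simp only [mem_erase, Sw, mem_filter, mem_Ico] at hx ⊢
      refine ⟨by omega, ⟨by omega, by omega⟩, ?_⟩
      rw [hu (x - 1) (by omega) (by omega), Nat.sub_add_cancel (by omega)]
      exact hx.2.2
    · intro x hx; simp
    · intro x hx
      simp only [mem_erase, Sw, mem_filter, mem_Ico] at hx
      beta_reduce
      omega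
    · -- factors agree
      intro x hx
      simp only [mem_erase, Sw, mem_filter, mem_Ico] at hx
      have hx1 : 1 ≤ x := hx.2.1.1
      have hxM : x < M := by omega
      unfold fw
      have eA : ((Finset.Ico 1 x).filter (fun j => u j = 1)).card
          = ((Finset.Ico 1 (x + 1)).filter (fun j => w j = 1)).card := by
        rw [card_shift 1 x u w (fun j hj1 hj2 => hu j hj1 (by omega))]
        rw [← Finset.insert_Ico_add_one_left_eq_Ico (by omega : 1 < x + 1), filter_insert]
        simp [h1]
      have eB : ((Finset.Ico (x + 1) (M + 1)).filter (fun j => u j = 1)).card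
          = ((Finset.Ico (x + 1 + 1) (M + 1)).filter (fun j => w j = 1)).card := by
        rw [Nat.Ico_succ_right_eq_insert_Ico (by omega : x + 1 ≤ M), filter_insert]
        simp only [huL]
        rw [if_neg (by simp)]
        exact card_shift (x + 1) M u w (fun j hj1 hj2 => hu j (by omega) (by omega))
      rw [eA, eB]
  · -- weight of w itself
    have hmem : 1 ∈ Sw (M + 1) w := by
      simp only [Sw, mem_filter, mem_Ico]; exact ⟨⟨le_refl 1, by omega⟩, h1⟩
    rw [Ww, ← Finset.mul_prod_erase _ _ hmem]
    have hf1 : fw p q (M + 1) w 1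
        = 1 + q * (((Finset.Ico 1 (M + 1)).filter (fun j => w j = 1)).card : ℝ) := by
      unfold fw
      rw [hN]
      simp [Finset.Ico_self]
    rw [hf1]
    rfl

lemma shiftR (p q : ℝ) (L : ℕ) (hL : 2 ≤ L) (w u : ℕ → Fin 3)
    (h1 : w (L - 1) = 0)
    (hu : ∀ j, 2 ≤ j → j < L → u j = w (j - 1)) (hu1 : u 1 = 0) :
    Ww p q L u = (1 + q * (((Finset.Ico 1 L).filter (fun j => w j = 1)).card : ℝ)) *
        Rw p q L w (L - 1) ∧
      Ww p q L w = (1 + p * (((Finset.Ico 1 L).filter (fun j => w j = 1)).card : ℝ)) *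
        Rw p q L w (L - 1) := by
  obtain ⟨M, rfl⟩ : ∃ M, L = M + 1 := ⟨L - 1, by omega⟩
  have hM : 1 ≤ M := by omega
  simp only [Nat.add_sub_cancel] at h1 ⊢
  have hN : ((Finset.Ico 1 (M + 1)).filter (fun j => w j = 1)).card
      = ((Finset.Ico 1 M).filter (fun j => w j = 1)).card := by
    rw [Nat.Ico_succ_right_eq_insert_Ico hM, filter_insert]
    simp [h1]
  have hshift : ∀ a b : ℕ, 1 ≤ a → b ≤ M →
      ((Finset.Ico a b).filter (fun j => w j = 1)).card
        = ((Finset.Ico (a + 1) (b + 1)).filter (fun j => u j = 1)).card := by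
    intro a b ha hb
    apply card_shift
    intro j hj1 hj2
    rw [hu (j + 1) (by omega) (by omega), Nat.add_sub_cancel]
  constructor
  · -- weight of the shifted word u
    have hmemu : 1 ∈ Sw (M + 1) u := by
      simp only [Sw, mem_filter, mem_Ico]; exact ⟨⟨le_refl 1, by omega⟩, hu1⟩
    rw [Ww, ← Finset.mul_prod_erase _ _ hmemu]
    have hf1 : fw p q (M + 1) u 1
        = 1 + q * (((Finset.Ico 1 (M + 1)).filter (fun j => w j = 1)).card : ℝ) := by
      unfold fw
      rw [hN, hshift 1 M (le_refl 1) (le_refl M)]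
      simp [Finset.Ico_self]
    rw [hf1]
    congr 1
    refine Finset.prod_nbij' (fun i => i - 1) (fun i => i + 1) ?_ ?_ ?_ ?_ ?_
    · intro x hx
      simp only [mem_erase, Sw, mem_filter, mem_Ico] at hx ⊢
      have hx2 : 2 ≤ x := by omega
      refine ⟨by omega, ⟨by omega, by omega⟩, ?_⟩
      rw [← hu x hx2 hx.2.1.2]
      exact hx.2.2
    · intro x hx
      simp only [mem_erase, Sw, mem_filter, mem_Ico] at hx ⊢
      refine ⟨by omega, ⟨by omega, by omega⟩, ?_⟩
      rw [hu (x + 1) (by omega) (by omega), Nat.add_sub_cancel]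
      exact hx.2.2
    · intro x hx
      simp only [mem_erase, Sw, mem_filter, mem_Ico] at hx
      beta_reduce
      omega
    · intro x hx; simp
    · -- factors agree
      intro x hx
      simp only [mem_erase, Sw, mem_filter, mem_Ico] at hx
      have hx2 : 2 ≤ x := by omega
      have hxM : x ≤ M := by omega
      unfold fw
      have eA : ((Finset.Ico 1 x).filter (fun j => u j = 1)).card
          = ((Finset.Ico 1 (x - 1)).filter (fun j => w j = 1)).card := by
        rw [hshift 1 (x - 1) (le_refl 1) (by omega)]
        have hx' : x - 1 + 1 = x := by omega
        rw [hx']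
        rw [← Finset.insert_Ico_add_one_left_eq_Ico (by omega : 1 < x), filter_insert]
        simp [hu1]
      have eB : ((Finset.Ico (x + 1) (M + 1)).filter (fun j => u j = 1)).card
          = ((Finset.Ico (x - 1 + 1) (M + 1)).filter (fun j => w j = 1)).card := by
        have hx' : x - 1 + 1 = x := by omega
        rw [hx', ← hshift x M (by omega) (le_refl M)]
        rw [Nat.Ico_succ_right_eq_insert_Ico (by omega : x ≤ M), filter_insert]
        simp [h1]
      rw [eA, eB]
  · -- weight of w itself
    have hmem : M ∈ Sw (M + 1) w := by
      simp only [Sw, mem_filter, mem_Ico]; exact ⟨⟨hM, by omega⟩, h1⟩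
    rw [Ww, ← Finset.mul_prod_erase _ _ hmem]
    have hfM : fw p q (M + 1) w M
        = 1 + p * (((Finset.Ico 1 (M + 1)).filter (fun j => w j = 1)).card : ℝ) := by
      unfold fw
      rw [hN]
      simp [Finset.Ico_self]
    rw [hfM]
    rfl

lemma Wloc_eq (p q : ℝ) (L : ℕ) (σ : ZMod L → Fin 3) (t : ZMod L) :
    Wloc p q L σ t = Ww p q L (fun k => σ (t + (k : ZMod L))) := rfl

lemma fin3_cases (b : Fin 3) : b = 0 ∨ b = 1 ∨ b = 2 := by fin_cases b <;> simp

lemma natCast_zmod_inj {L a b : ℕ} (ha : a < L) (hb : b < L) (h : (a : ZMod L) = b) : a = b := by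
  have h1 := ZMod.val_cast_of_lt ha
  have h2 := ZMod.val_cast_of_lt hb
  rw [h] at h1; omega

lemma sum_zmod_shift {L : ℕ} [NeZero L] (F : ZMod L → ℝ) (t : ZMod L) :
    ∑ i : ZMod L, F i = ∑ k ∈ range L, F (t + (k : ZMod L)) := by
  rw [← Equiv.sum_comp (Equiv.addLeft t) F]
  apply Finset.sum_nbij' (fun i => (ZMod.val i)) (fun k => (k : ZMod L)) <;> intros <;>
    simp_all [ZMod.val_lt, ZMod.natCast_val, ZMod.val_cast_of_lt, Nat.mod_eq_of_lt,
      Equiv.addLeft]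

lemma rate_10 (p q : ℝ) : rate p q 1 0 = 1 := by simp [rate]
lemma rate_01 (p q : ℝ) : rate p q 0 1 = 1 := by simp [rate]
lemma rate_20 (p q : ℝ) : rate p q 2 0 = p := by simp [rate]
lemma rate_02 (p q : ℝ) : rate p q 0 2 = q := by simp [rate]

/-- the master equation for the stationary weight `W`:
`∑_i r(σ(i+1), σ(i)) · W(σ^{(i)}) = W(σ) · ∑_i r(σ(i), σ(i+1))`. -/
theorem master_equation (L n : ℕ) [NeZero L] (hL : 2 ≤ L) (hn : n ≤ L - 1)
    (p q : ℝ) (σ : ZMod L → Fin 3)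
    (htracer : (univ.filter (fun t : ZMod L => σ t = 2)).card = 1)
    (hones : (univ.filter (fun i : ZMod L => σ i = 1)).card = n) :
    ∑ i : ZMod L, rate p q (σ (i + 1)) (σ i) * W p q L (swapAt σ i)
      = W p q L σ * ∑ i : ZMod L, rate p q (σ i) (σ (i + 1)) := by
  classical
  obtain ⟨t, ht⟩ := Finset.card_eq_one.mp htracer
  have htmem : σ t = 2 := by
    have h := ht ▸ Finset.mem_singleton_self t
    simpa using h
  have huniq : ∀ x : ZMod L, σ x = 2 → x = t := by
    intro x hx
    have hm : x ∈ univ.filter (fun y : ZMod L => σ y = 2) := by simpa using hx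
    rw [ht] at hm
    simpa using hm
  set w : ℕ → Fin 3 := fun k => σ (t + (k : ZMod L)) with hwdef
  have hw : ∀ k : ℕ, σ (t + (k : ZMod L)) = w k := fun _ => rfl
  have hne0 : ∀ k : ℕ, 1 ≤ k → k < L → (k : ZMod L) ≠ 0 := by
    intro k h1 h2 h0
    have hdvd : L ∣ k := (ZMod.natCast_eq_zero_iff k L).mp h0
    have := Nat.le_of_dvd (by omega) hdvd
    omega
  have hw0 : w 0 = 2 := by
    have h00 : ((0:ℕ) : ZMod L) = 0 := by norm_num
    rw [← hw 0, h00, add_zero]; exact htmem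
  have hwk2 : ∀ k, 1 ≤ k → k < L → w k ≠ 2 := by
    intro k h1 h2 hk
    have heq : t + (k : ZMod L) = t := huniq _ hk
    have hc : (k : ZMod L) = 0 := by
      have h' : t + (k : ZMod L) = t + 0 := by rw [heq, add_zero]
      exact add_left_cancel h'
    exact hne0 k h1 h2 hc
  have hwL : w L = 2 := by
    rw [← hw L, ZMod.natCast_self, add_zero]; exact htmem
  have hWσ : W p q L σ = Ww p q L w := by
    rw [W, ht, Finset.sum_singleton, Wloc_eq]
  have hadd1 : ∀ k : ℕ, t + (k : ZMod L) + 1 = t + ((k + 1 : ℕ) : ZMod L) := by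
    intro k; push_cast; ring
  have hcast : ∀ a b : ℕ, a < L → b < L → ((t + (a : ZMod L) = t + (b : ZMod L)) ↔ a = b) := by
    intro a b ha hb
    constructor
    · intro h; exact natCast_zmod_inj ha hb (add_left_cancel h)
    · rintro rfl; rfl
  have hnet : ∀ j : ℕ, 1 ≤ j → j < L → t + (j : ZMod L) ≠ t := by
    intro j h1 h2 h
    apply hne0 j h1 h2
    have h' : t + (j : ZMod L) = t + 0 := by rw [h, add_zero]
    exact add_left_cancel h'
  have memSw : ∀ k, k ∈ Sw L w ↔ (1 ≤ k ∧ k < L ∧ w k = 0) := by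
    intro k; simp [Sw, Finset.mem_filter, Finset.mem_Ico, and_assoc]
  have notSw : ∀ m, w m ≠ 0 → m ∉ Sw L w := by
    intro m hm hmem; exact hm ((memSw m).mp hmem).2.2
  have hWgen : ∀ (τ : ZMod L → Fin 3) (s : ZMod L), τ s = 2 → (∀ x, x ≠ s → τ x ≠ 2) →
      W p q L τ = Ww p q L (fun k => τ (s + (k : ZMod L))) := by
    intro τ s h1 h2
    have hfil : univ.filter (fun x : ZMod L => τ x = 2) = {s} := by
      ext x
      simp only [Finset.mem_filter, Finset.mem_univ, true_and, Finset.mem_singleton]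
      constructor
      · intro hx; by_contra hne; exact h2 x hne hx
      · rintro rfl; exact h1
    rw [W, hfil, Finset.sum_singleton, Wloc_eq]
  -- bulk: swapping two non-tracer neighbours
  have hbulk : ∀ k : ℕ, 1 ≤ k → k + 1 < L →
      W p q L (swapAt σ (t + (k : ZMod L))) = Ww p q L (swapW w k) := by
    intro k hk1 hkL
    have hik : (t + (k : ZMod L)) + 1 = t + ((k + 1 : ℕ) : ZMod L) := hadd1 k
    have h2' : swapAt σ (t + (k : ZMod L)) t = 2 := by
      rw [swapAt]
      rw [if_neg (fun h => hnet k hk1 (by omega) h.symm),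
        if_neg (fun h => hnet (k+1) (by omega) hkL (by rw [← hik]; exact h.symm))]
      exact htmem
    have h3' : ∀ x, x ≠ t → swapAt σ (t + (k : ZMod L)) x ≠ 2 := by
      intro x hx
      rw [swapAt]
      split_ifs with hc1 hc2
      · rw [hik, hw (k+1)]; exact hwk2 (k+1) (by omega) hkL
      · rw [hw k]; exact hwk2 k hk1 (by omega)
      · intro h; exact hx (huniq x h)
    rw [hWgen _ _ h2' h3']
    apply Ww_congr
    intro j hj1 hjL
    show swapAt σ (t + (k : ZMod L)) (t + (j : ZMod L)) = swapW w k j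
    have e1 : (t + (j : ZMod L) = t + (k : ZMod L)) ↔ j = k := hcast j k (by omega) (by omega)
    have e2 : (t + (j : ZMod L) = t + (k : ZMod L) + 1) ↔ j = k + 1 := by
      rw [hik]; exact hcast j (k+1) (by omega) hkL
    rw [swapAt, swapW]
    by_cases hjk : j = k
    · rw [if_pos (e1.mpr hjk), if_pos hjk, hik, hw]
    · rw [if_neg (fun h => hjk (e1.mp h)), if_neg hjk]
      by_cases hjk1 : j = k + 1
      · rw [if_pos (e2.mpr hjk1), if_pos hjk1, hw]
      · rw [if_neg (fun h => hjk1 (e2.mp h)), if_neg hjk1, hw]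
  -- the number of ordinary particles
  set N : ℝ := (((Finset.Ico 1 L).filter (fun j => w j = 1)).card : ℝ) with hN
  -- the two boundary identities
  -- case k = 0 : tracer moves right
  have hbdry0 : w 1 = 0 →
      W p q L (swapAt σ (t + ((0:ℕ) : ZMod L))) = (1 + p * N) * Rw p q L w 1 ∧
        Ww p q L w = (1 + q * N) * Rw p q L w 1 := by
    intro h1
    have h00 : t + ((0:ℕ) : ZMod L) = t := by norm_num
    have hone : ((1:ℕ) : ZMod L) = 1 := Nat.cast_one
    have ht1 : σ (t + 1) = w 1 := by rw [← hone, hw]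
    have hnt1 : t + 1 ≠ t := by
      intro h
      exact hnet 1 le_rfl (by omega) (by rw [hone]; exact h)
    have h2' : swapAt σ t (t + 1) = 2 := by
      rw [swapAt, if_neg hnt1, if_pos rfl]; exact htmem
    have h3' : ∀ x, x ≠ t + 1 → swapAt σ t x ≠ 2 := by
      intro x hx
      rw [swapAt]
      split_ifs with hc1
      · rw [ht1, h1]; exact (by decide : (0 : Fin 3) ≠ 2)
      · intro h
        exact hc1 (huniq x h)
    have hWu := hWgen _ _ h2' h3'
    have hSL := shiftL p q L hL w (fun j => swapAt σ t (t + 1 + (j : ZMod L))) h1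
      (by
        intro j hj1 hjL
        have hx : t + 1 + (j : ZMod L) = t + ((j + 1 : ℕ) : ZMod L) := by push_cast; ring
        have e2 : (t + ((j + 1 : ℕ) : ZMod L) = t + 1) ↔ j + 1 = 1 := by
          rw [← hone]; exact hcast (j+1) 1 (by omega) (by omega)
        show swapAt σ t (t + 1 + (j : ZMod L)) = w (j + 1)
        rw [hx, swapAt,
          if_neg (fun h => hnet (j+1) (by omega) (by omega) h),
          if_neg (fun h => absurd (e2.mp h) (by omega)), hw])
      (by
        have hx : t + 1 + ((L - 1 : ℕ) : ZMod L) = t := by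
          have h' : ((1 + (L - 1) : ℕ) : ZMod L) = ((L : ℕ) : ZMod L) := by
            rw [show 1 + (L - 1) = L by omega]
          push_cast at h'
          rw [add_assoc, h', ZMod.natCast_self, add_zero]
        show swapAt σ t (t + 1 + ((L - 1 : ℕ) : ZMod L)) = 0
        rw [hx, swapAt, if_pos rfl, ht1, h1])
    rw [h00, hWu]
    exact ⟨hSL.1, hSL.2⟩
  -- case k = L-1 : tracer moves left
  have hbdryL : w (L - 1) = 0 →
      W p q L (swapAt σ (t + ((L - 1 : ℕ) : ZMod L))) = (1 + q * N) * Rw p q L w (L - 1) ∧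
        Ww p q L w = (1 + p * N) * Rw p q L w (L - 1) := by
    intro h1
    have hone : ((1:ℕ) : ZMod L) = 1 := Nat.cast_one
    set i : ZMod L := t + ((L - 1 : ℕ) : ZMod L) with hidef
    have hi1 : i + 1 = t := by
      have h' : (((L - 1) + 1 : ℕ) : ZMod L) = ((L : ℕ) : ZMod L) := by
        rw [show (L - 1) + 1 = L by omega]
      push_cast at h'
      rw [hidef, add_assoc, h', ZMod.natCast_self, add_zero]
    have hit : i ≠ t := hnet (L-1) (by omega) (by omega)
    have h2' : swapAt σ i i = 2 := by
      rw [swapAt, if_pos rfl, hi1]; exact htmem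
    have h3' : ∀ x, x ≠ i → swapAt σ i x ≠ 2 := by
      intro x hx
      rw [swapAt, if_neg hx]
      split_ifs with hc
      · show σ i ≠ 2
        rw [hidef, hw (L-1), h1]
        exact (by decide : (0 : Fin 3) ≠ 2)
      · intro h
        exact hc (by rw [huniq x h, ← hi1])
    have hWu := hWgen _ _ h2' h3'
    have hSR := shiftR p q L hL w (fun j => swapAt σ i (i + (j : ZMod L))) h1
      (by
        intro j hj2 hjL
        show swapAt σ i (i + (j : ZMod L)) = w (j - 1)
        have hx : i + (j : ZMod L) = t + ((j - 1 : ℕ) : ZMod L) := by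
          have h' : (((L - 1) + j : ℕ) : ZMod L) = ((L + (j - 1) : ℕ) : ZMod L) := by
            rw [show (L - 1) + j = L + (j - 1) by omega]
          push_cast at h'
          rw [hidef, add_assoc, h', ZMod.natCast_self, zero_add]
        rw [hx, swapAt]
        rw [if_neg (fun h => by
          rw [hidef] at h
          exact absurd ((hcast (j-1) (L-1) (by omega) (by omega)).mp h) (by omega))]
        rw [if_neg (fun h => by
          rw [hi1] at h
          exact hnet (j-1) (by omega) (by omega) h)])
      (by
        show swapAt σ i (i + ((1:ℕ) : ZMod L)) = 0
        rw [hone, swapAt]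
        rw [if_neg (fun h => by
          have : i + 1 = i := h
          rw [hi1] at this
          exact hit this.symm)]
        rw [if_pos rfl]
        show σ i = 0
        rw [hidef, hw (L-1), h1])
    exact ⟨by rw [hWu]; exact hSR.1, hSR.2⟩
  -- termwise identity
  have hterm : ∀ k ∈ range L,
      rate p q (σ (t + (k : ZMod L) + 1)) (σ (t + (k : ZMod L)))
          * W p q L (swapAt σ (t + (k : ZMod L)))
        - Ww p q L w * rate p q (σ (t + (k : ZMod L))) (σ (t + (k : ZMod L) + 1))
      = (if k + 1 ∈ Sw L w ∧ k ∉ Sw L w then (q - p) * Rw p q L w (k + 1) else 0)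
        + (if k ∈ Sw L w ∧ k + 1 ∉ Sw L w then (p - q) * Rw p q L w k else 0) := by
    intro k hk
    rw [Finset.mem_range] at hk
    have ek1 : σ (t + (k : ZMod L) + 1) = w (k + 1) := by rw [hadd1 k]
    rw [ek1, hw k]
    rcases fin3_cases (w k) with hk0 | hk0 | hk0 <;>
      rcases fin3_cases (w (k+1)) with hk1 | hk1 | hk1
    -- (0,0)
    · have hkge : 1 ≤ k := by
        rcases Nat.eq_zero_or_pos k with rfl | h
        · rw [hw0] at hk0; exact absurd hk0 (by decide)
        · omega
      have hklt : k + 1 < L := by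
        rcases Nat.lt_or_ge (k+1) L with h | h
        · exact h
        · have hLe : k + 1 = L := by omega
          rw [hLe, hwL] at hk1; exact absurd hk1 (by decide)
      have m1 : k ∈ Sw L w := (memSw k).mpr ⟨hkge, by omega, hk0⟩
      have m2 : k + 1 ∈ Sw L w := (memSw (k+1)).mpr ⟨by omega, hklt, hk1⟩
      rw [hk0, hk1, if_neg (fun hc => hc.2 m1), if_neg (fun hc => hc.2 m2)]
      simp [rate]
    -- (0,1)
    · have hkge : 1 ≤ k := by
        rcases Nat.eq_zero_or_pos k with rfl | h
        · rw [hw0] at hk0; exact absurd hk0 (by decide)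
        · omega
      have hklt : k + 1 < L := by
        rcases Nat.lt_or_ge (k+1) L with h | h
        · exact h
        · have hLe : k + 1 = L := by omega
          rw [hLe, hwL] at hk1; exact absurd hk1 (by decide)
      have m1 : k ∈ Sw L w := (memSw k).mpr ⟨hkge, by omega, hk0⟩
      have m2' : k + 1 ∉ Sw L w := notSw (k+1) (by rw [hk1]; decide)
      obtain ⟨hsw, hww⟩ := swap01 p q L w k hkge hklt hk0 hk1
      rw [hk0, hk1, hbulk k hkge hklt, hsw, hww,
        if_neg (fun hc => hc.2 m1), if_pos ⟨m1, m2'⟩, rate_10, rate_01]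
      ring
    -- (0,2) : k = L-1
    · have hkeq : k + 1 = L := by
        by_contra h
        exact hwk2 (k+1) (by omega) (by omega) hk1
      have hk' : k = L - 1 := by omega
      subst hk'
      obtain ⟨hA, hB⟩ := hbdryL hk0
      have mEnd : L - 1 ∈ Sw L w := (memSw (L-1)).mpr ⟨by omega, by omega, hk0⟩
      have mL : L - 1 + 1 ∉ Sw L w := by
        intro hm
        have := ((memSw (L-1+1)).mp hm).2.1
        omega
      rw [hk0, hk1, hA, hB, if_neg (fun hc => mL hc.1),
        if_pos ⟨mEnd, mL⟩, rate_20, rate_02]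
      ring
    -- (1,0)
    · have hkge : 1 ≤ k := by
        rcases Nat.eq_zero_or_pos k with rfl | h
        · rw [hw0] at hk0; exact absurd hk0 (by decide)
        · omega
      have hklt : k + 1 < L := by
        rcases Nat.lt_or_ge (k+1) L with h | h
        · exact h
        · have hLe : k + 1 = L := by omega
          rw [hLe, hwL] at hk1; exact absurd hk1 (by decide)
      have m2 : k + 1 ∈ Sw L w := (memSw (k+1)).mpr ⟨by omega, hklt, hk1⟩
      have m1' : k ∉ Sw L w := notSw k (by rw [hk0]; decide)
      obtain ⟨hsw, hww⟩ := swap10 p q L w k hkge hklt hk0 hk1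
      rw [hk0, hk1, hbulk k hkge hklt, hsw, hww,
        if_pos ⟨m2, m1'⟩, if_neg (fun hc => m1' hc.1), rate_01, rate_10]
      ring
    -- (1,1)
    · have m1' : k ∉ Sw L w := notSw k (by rw [hk0]; decide)
      have m2' : k + 1 ∉ Sw L w := notSw (k+1) (by rw [hk1]; decide)
      rw [hk0, hk1, if_neg (fun hc => m2' hc.1), if_neg (fun hc => m1' hc.1)]
      simp [rate]
    -- (1,2)
    · have m1' : k ∉ Sw L w := notSw k (by rw [hk0]; decide)
      have m2' : k + 1 ∉ Sw L w := notSw (k+1) (by rw [hk1]; decide)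
      rw [hk0, hk1, if_neg (fun hc => m2' hc.1), if_neg (fun hc => m1' hc.1)]
      simp [rate]
    -- (2,0) : k = 0
    · have hk00 : k = 0 := by
        by_contra h
        exact hwk2 k (by omega) hk hk0
      subst hk00
      simp only [Nat.zero_add] at hk1 ⊢
      obtain ⟨hA, hB⟩ := hbdry0 hk1
      have m1 : 1 ∈ Sw L w := (memSw 1).mpr ⟨le_rfl, by omega, hk1⟩
      have m0 : (0:ℕ) ∉ Sw L w := by
        intro hm
        have := ((memSw 0).mp hm).1
        omega
      rw [hk0, hk1, hA, hB, if_pos ⟨m1, m0⟩, if_neg (fun hc => m0 hc.1),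
        rate_02, rate_20]
      ring
    -- (2,1)
    · have m1' : k ∉ Sw L w := notSw k (by rw [hk0]; decide)
      have m2' : k + 1 ∉ Sw L w := notSw (k+1) (by rw [hk1]; decide)
      rw [hk0, hk1, if_neg (fun hc => m2' hc.1), if_neg (fun hc => m1' hc.1)]
      simp [rate]
    -- (2,2)
    · have m1' : k ∉ Sw L w := notSw k (by rw [hk0]; decide)
      have m2' : k + 1 ∉ Sw L w := notSw (k+1) (by rw [hk1]; decide)
      rw [hk0, hk1, if_neg (fun hc => m2' hc.1), if_neg (fun hc => m1' hc.1)]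
      simp [rate]
  -- assemble
  rw [hWσ, sum_zmod_shift (fun i => rate p q (σ (i + 1)) (σ i) * W p q L (swapAt σ i)) t,
    sum_zmod_shift (fun i => rate p q (σ i) (σ (i + 1))) t, Finset.mul_sum, ← sub_eq_zero,
    ← Finset.sum_sub_distrib]
  rw [Finset.sum_congr rfl hterm]
  rw [Finset.sum_add_distrib]
  have e1 : ∑ k ∈ range L,
      (if k + 1 ∈ Sw L w ∧ k ∉ Sw L w then (q - p) * Rw p q L w (k + 1) else 0)
      = (q - p) * ∑ v ∈ (Sw L w).filter (fun v => v - 1 ∉ Sw L w), Rw p q L w v := by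
    rw [← Finset.sum_filter, Finset.mul_sum]
    refine Finset.sum_nbij' (fun k => k + 1) (fun v => v - 1) ?_ ?_ ?_ ?_ ?_
    · intro a ha
      simp only [Finset.mem_filter, Finset.mem_range] at ha ⊢
      exact ⟨ha.2.1, by simpa [Nat.add_sub_cancel] using ha.2.2⟩
    · intro a ha
      simp only [Finset.mem_filter, Finset.mem_range] at ha ⊢
      have h1a := (memSw a).mp ha.1
      refine ⟨by omega, ?_, ha.2⟩
      rw [Nat.sub_add_cancel (by omega)]
      exact ha.1
    · intro a ha; simp
    · intro a ha
      simp only [Finset.mem_filter] at ha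
      have h1a := (memSw a).mp ha.1
      beta_reduce
      omega
    · intro a ha; rfl
  have e2 : ∑ k ∈ range L,
      (if k ∈ Sw L w ∧ k + 1 ∉ Sw L w then (p - q) * Rw p q L w k else 0)
      = (p - q) * ∑ v ∈ (Sw L w).filter (fun v => v + 1 ∉ Sw L w), Rw p q L w v := by
    rw [← Finset.sum_filter, Finset.mul_sum]
    apply Finset.sum_congr
    · ext a
      simp only [Finset.mem_filter, Finset.mem_range]
      constructor
      · rintro ⟨-, h1, h2⟩; exact ⟨h1, h2⟩
      · rintro ⟨h1, h2⟩; exact ⟨((memSw a).mp h1).2.1, h1, h2⟩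
    · intros; rfl
  rw [e1, e2, key p q L w]
  ring
end

section
/- Let n ≥ 1 and L ≥ n+2 be integers and let p, q be real parameters with p ≠ −1. Then the restricted partition function satisfies the recurrence R(L, n; p, q) = (1 + n·q)·R(L−1, n; p, q) + (1+p)^{L−n−1}·R(L−1, n−1; p/(1+p), q/(1+p)). -/
open Finset

/-- The stationary weight of a word `a` with entries in `{0,1}` (encoded as `Fin 2`):
the product over positions `i` with `a i = 0` of `1 + p·m_i(a) + q·n_i(a)`,
where `m_i(a)` (resp. `n_i(a)`) is the number of `1`'s strictly before (resp. after) `i`. -/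
noncomputable def wt (p q : ℝ) {m : ℕ} (a : Fin m → Fin 2) : ℝ :=
  ∏ i ∈ univ.filter (fun i => a i = 0),
    (1 + p * ((univ.filter (fun j => j < i ∧ a j = 1)).card : ℝ)
       + q * ((univ.filter (fun j => i < j ∧ a j = 1)).card : ℝ))

/-- The number of `1`'s in the word `a`. -/
def ones {m : ℕ} (a : Fin m → Fin 2) : ℕ := (univ.filter (fun i => a i = 1)).card

/-- The restricted partition function `R(L, n; p, q)`: the sum of the weights `wt p q a`
over all words `a` of length `L - 1` with entries in `{0,1}` having exactly `n` ones. -/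
noncomputable def R (L n : ℕ) (p q : ℝ) : ℝ :=
  ∑ a ∈ univ.filter (fun a : Fin (L - 1) → Fin 2 => ones a = n), wt p q a

lemma before_succ {m : ℕ} (a : Fin (m+1) → Fin 2) (x : Fin 2) (b : Fin m → Fin 2)
    (ha : a = Fin.cons x b) (i : Fin m) :
    (univ.filter (fun j => j < i.succ ∧ a j = 1)).card
      = (if x = 1 then 1 else 0) + (univ.filter (fun j => j < i ∧ b j = 1)).card := by
  subst ha
  rw [Finset.card_filter, Finset.card_filter, Fin.sum_univ_succ]
  simp [Fin.cons_zero, Fin.cons_succ, Fin.succ_pos, Fin.succ_lt_succ_iff]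

lemma after_succ {m : ℕ} (a : Fin (m+1) → Fin 2) (x : Fin 2) (b : Fin m → Fin 2)
    (ha : a = Fin.cons x b) (i : Fin m) :
    (univ.filter (fun j => i.succ < j ∧ a j = 1)).card
      = (univ.filter (fun j => i < j ∧ b j = 1)).card := by
  subst ha
  rw [Finset.card_filter, Finset.card_filter, Fin.sum_univ_succ]
  simp [Fin.cons_succ, Fin.succ_lt_succ_iff, Fin.not_lt_zero]

lemma after_zero {m : ℕ} (a : Fin (m+1) → Fin 2) (x : Fin 2) (b : Fin m → Fin 2)
    (ha : a = Fin.cons x b) :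
    (univ.filter (fun j => 0 < j ∧ a j = 1)).card = ones b := by
  subst ha
  rw [Finset.card_filter, ones, Finset.card_filter, Fin.sum_univ_succ]
  simp [Fin.cons_succ, Fin.succ_pos]

lemma before_zero {m : ℕ} (a : Fin (m+1) → Fin 2) :
    (univ.filter (fun j => j < 0 ∧ a j = 1)).card = 0 := by
  simp [Fin.not_lt_zero]

lemma ones_cons {m : ℕ} (a : Fin (m+1) → Fin 2) (x : Fin 2) (b : Fin m → Fin 2)
    (ha : a = Fin.cons x b) :
    ones a = (if x = 1 then 1 else 0) + ones b := by
  subst ha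
  rw [ones, ones, Finset.card_filter, Finset.card_filter, Fin.sum_univ_succ]
  simp [Fin.cons_zero, Fin.cons_succ]

lemma zeros_card {m : ℕ} (b : Fin m → Fin 2) :
    (univ.filter (fun i => b i = 0)).card = m - ones b := by
  have h2 : ∀ x : Fin 2, (x = 0) ↔ ¬ (x = 1) := by decide
  have := Finset.card_filter_add_card_filter_not
    (s := (univ : Finset (Fin m))) (p := fun i => b i = 1)
  rw [Finset.filter_congr (fun i _ => h2 (b i))] at *
  rw [ones] at *
  simp only [Finset.card_univ, Fintype.card_fin] at this
  omega

lemma wt_cons_zero {m : ℕ} (a : Fin (m+1) → Fin 2) (b : Fin m → Fin 2)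
    (ha : a = Fin.cons 0 b) (p q : ℝ) :
    wt p q a = (1 + q * (ones b : ℝ)) * wt p q b := by
  rw [wt, wt, Finset.prod_filter, Finset.prod_filter, Fin.prod_univ_succ]
  have h0 : a 0 = 0 := by rw [ha]; exact Fin.cons_zero _ _
  refine congrArg₂ (· * ·) ?_ (Finset.prod_congr rfl fun i _ => ?_)
  · rw [if_pos h0, before_zero a, after_zero a 0 b ha]
    push_cast
    ring
  · rw [before_succ a 0 b ha i, after_succ a 0 b ha i]
    have : a i.succ = b i := by rw [ha]; exact Fin.cons_succ _ _ _
    simp [this]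

lemma wt_cons_one {m : ℕ} (a : Fin (m+1) → Fin 2) (b : Fin m → Fin 2)
    (ha : a = Fin.cons 1 b) (p q : ℝ) (hp : (1 : ℝ) + p ≠ 0) :
    wt p q a = (1 + p) ^ (m - ones b) * wt (p / (1+p)) (q / (1+p)) b := by
  rw [wt, wt, Finset.prod_filter, Finset.prod_filter, Fin.prod_univ_succ]
  have h0 : a 0 = 1 := by rw [ha]; exact Fin.cons_zero _ _
  have h1 : ¬ a 0 = 0 := by rw [h0]; decide
  rw [if_neg h1, one_mul]
  have key : ∀ i : Fin m,
      (if a i.succ = 0 then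
        (1 + p * ((univ.filter (fun j => j < i.succ ∧ a j = 1)).card : ℝ)
           + q * ((univ.filter (fun j => i.succ < j ∧ a j = 1)).card : ℝ)) else 1)
      = (if b i = 0 then (1 + p) else 1) *
        (if b i = 0 then
          (1 + p/(1+p) * ((univ.filter (fun j => j < i ∧ b j = 1)).card : ℝ)
             + q/(1+p) * ((univ.filter (fun j => i < j ∧ b j = 1)).card : ℝ)) else 1) := by
    intro i
    rw [before_succ a 1 b ha i, after_succ a 1 b ha i]
    have hbi : a i.succ = b i := by rw [ha]; exact Fin.cons_succ _ _ _
    rw [hbi]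
    by_cases hb : b i = 0
    · rw [if_pos hb, if_pos hb, if_pos hb, if_pos rfl]
      push_cast
      field_simp
      ring
    · rw [if_neg hb, if_neg hb, if_neg hb, one_mul]
  rw [Finset.prod_congr rfl (fun i _ => key i), Finset.prod_mul_distrib,
    ← Finset.prod_filter, Finset.prod_const, zeros_card]

lemma R_eq (m n : ℕ) (p q : ℝ) :
    R (m+1) n p q = ∑ a ∈ univ.filter (fun a : Fin m → Fin 2 => ones a = n), wt p q a := rfl

/-- the recurrence for the restricted partition function. -/
theorem R_recurrence (L n : ℕ) (hn : 1 ≤ n) (hL : n + 2 ≤ L) (p q : ℝ) (hp : p ≠ -1) :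
    R L n p q = (1 + (n : ℝ) * q) * R (L - 1) n p q
      + (1 + p) ^ (L - n - 1) * R (L - 1) (n - 1) (p / (1 + p)) (q / (1 + p)) := by
  have hp1 : (1:ℝ) + p ≠ 0 := fun h => hp (by linarith)
  obtain ⟨n', rfl⟩ : ∃ n', n = n' + 1 := ⟨n - 1, by omega⟩
  obtain ⟨M, rfl⟩ : ∃ M, L = M + 2 := ⟨L - 2, by omega⟩
  have he : M + 2 - (n' + 1) - 1 = M - n' := by omega
  rw [he, show M + 2 - 1 = M + 1 from rfl, show n' + 1 - 1 = n' from rfl,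
    show (M:ℕ) + 2 = (M+1)+1 from rfl, R_eq, R_eq, R_eq]
  simp only [Finset.sum_filter]
  rw [← Equiv.sum_comp (Fin.consEquiv (fun _ : Fin (M+1) => Fin 2))]
  rw [Fintype.sum_prod_type, Fin.sum_univ_two]
  have hc : ∀ (x : Fin 2) (y : Fin M → Fin 2),
      (Fin.consEquiv fun _ : Fin (M+1) => Fin 2) (x, y) = Fin.cons x y := fun _ _ => rfl
  simp only [hc]
  have t0 : ∀ b : Fin M → Fin 2,
      (if ones (Fin.cons (0:Fin 2) b : Fin (M+1) → Fin 2) = n'+1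
        then wt p q (Fin.cons 0 b : Fin (M+1) → Fin 2) else 0)
      = (1 + ((n':ℝ)+1) * q) * (if ones b = n'+1 then wt p q b else 0) := by
    intro b
    rw [wt_cons_zero (Fin.cons 0 b : Fin (M+1) → Fin 2) b rfl p q,
      ones_cons (Fin.cons 0 b : Fin (M+1) → Fin 2) 0 b rfl]
    have e0 : (if (0:Fin 2) = 1 then 1 else 0) = 0 := by norm_num
    rw [e0, zero_add]
    by_cases h : ones b = n'+1
    · rw [if_pos h, if_pos h, h]
      push_cast
      ring
    · rw [if_neg h, if_neg h, mul_zero]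
  have t1 : ∀ b : Fin M → Fin 2,
      (if ones (Fin.cons (1:Fin 2) b : Fin (M+1) → Fin 2) = n'+1
        then wt p q (Fin.cons 1 b : Fin (M+1) → Fin 2) else 0)
      = (1 + p) ^ (M - n') * (if ones b = n' then wt (p/(1+p)) (q/(1+p)) b else 0) := by
    intro b
    rw [wt_cons_one (Fin.cons 1 b : Fin (M+1) → Fin 2) b rfl p q hp1,
      ones_cons (Fin.cons 1 b : Fin (M+1) → Fin 2) 1 b rfl]
    have e1 : (if (1:Fin 2) = 1 then 1 else 0) = 1 := by norm_num
    rw [e1]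
    by_cases h : ones b = n'
    · rw [if_pos (by omega : 1 + ones b = n' + 1), if_pos h, h]
    · rw [if_neg (by omega : ¬ (1 + ones b = n' + 1)), if_neg h, mul_zero]
  rw [Finset.sum_congr rfl (fun b _ => t0 b), Finset.sum_congr rfl (fun b _ => t1 b),
    ← Finset.mul_sum, ← Finset.mul_sum]
  push_cast
  ring
end

section
/- Let p, q be real parameters with p ≠ q and let x, y be arbitrary real numbers. Then the family (ℓ ↦ (∑_{n=0}^{ℓ} R(ℓ+1, n; p, q)·x^n) · y^ℓ/ℓ!), indexed by ℓ ∈ ℕ, has sum (HasSum) equal to exp( y + x·(exp(p·y) − exp(q·y))/(p−q) ). -/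
open Finset

/-! ### Auxiliary development -/

/-- Generic weight: a zero at position `i` gets weight `α l` where `l` is the number of
ones strictly before `i`. -/
noncomputable def Wgen (α : ℕ → ℝ) {m : ℕ} (a : Fin m → Fin 2) : ℝ :=
  ∏ i, (if a i = 0 then α ((univ.filter (fun j => j < i ∧ a j = 1)).card) else 1)

/-- The transfer recursion. -/
noncomputable def DD (α : ℕ → ℝ) : ℕ → ℕ → ℝ
  | 0, 0 => 1
  | 0, _ + 1 => 0
  | ℓ + 1, 0 => α 0 * DD α ℓ 0
  | ℓ + 1, k + 1 => α (k + 1) * DD α ℓ (k + 1) + DD α ℓ k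

/-- The closed form. -/
noncomputable def phi (β d : ℝ) (ℓ k : ℕ) : ℝ :=
  ∑ j ∈ Finset.range (k + 1),
    (-1 : ℝ) ^ (k - j) * (β + j * d) ^ ℓ / (d ^ k * j.factorial * (k - j).factorial)

lemma ones_snoc {ℓ : ℕ} (b : Fin ℓ → Fin 2) (x : Fin 2) :
    ones (Fin.snoc b x) = ones b + (if x = 1 then 1 else 0) := by
  unfold ones
  rw [card_filter, card_filter, Fin.sum_univ_castSucc]
  simp [Fin.snoc_castSucc, Fin.snoc_last]

lemma card_lt_snoc {ℓ : ℕ} (b : Fin ℓ → Fin 2) (x : Fin 2) (i : Fin ℓ) :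
    (univ.filter (fun j : Fin (ℓ+1) => j < i.castSucc ∧ (Fin.snoc b x : Fin (ℓ+1) → Fin 2) j = 1)).card
      = (univ.filter (fun j => j < i ∧ b j = 1)).card := by
  rw [card_filter, card_filter, Fin.sum_univ_castSucc]
  have h1 : ¬ (Fin.last ℓ < i.castSucc) := (Fin.castSucc_lt_last i).asymm
  simp [Fin.snoc_castSucc, Fin.snoc_last, Fin.castSucc_lt_castSucc_iff, h1]

lemma card_lt_last {ℓ : ℕ} (b : Fin ℓ → Fin 2) (x : Fin 2) :
    (univ.filter (fun j : Fin (ℓ+1) => j < Fin.last ℓ ∧ (Fin.snoc b x : Fin (ℓ+1) → Fin 2) j = 1)).card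
      = ones b := by
  unfold ones
  rw [card_filter, card_filter, Fin.sum_univ_castSucc]
  simp [Fin.snoc_castSucc, Fin.snoc_last, Fin.castSucc_lt_last]

lemma Wgen_snoc (α : ℕ → ℝ) {ℓ : ℕ} (b : Fin ℓ → Fin 2) (x : Fin 2) :
    Wgen α (Fin.snoc b x) = Wgen α b * (if x = 0 then α (ones b) else 1) := by
  unfold Wgen
  rw [Fin.prod_univ_castSucc]
  congr 1
  · apply Finset.prod_congr rfl
    intro i _
    rw [card_lt_snoc]
    simp [Fin.snoc_castSucc]
  · rw [card_lt_last]
    simp [Fin.snoc_last]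

/-- Summing the generic weight over words with `k` ones gives `DD`. -/
lemma sum_Wgen (α : ℕ → ℝ) : ∀ ℓ k : ℕ,
    ∑ a ∈ univ.filter (fun a : Fin ℓ → Fin 2 => ones a = k), Wgen α a = DD α ℓ k := by
  intro ℓ
  induction ℓ with
  | zero =>
    intro k
    cases k with
    | zero => simp [DD, Wgen, ones, Finset.sum_filter]
    | succ k => simp [DD, ones, Finset.sum_filter]
  | succ ℓ IH =>
    intro k
    have hsnoc : ∀ z : Fin 2 × (Fin ℓ → Fin 2),
        (Fin.snocEquiv (fun _ => Fin 2)) z = Fin.snoc z.2 z.1 := fun z => rfl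
    rw [Finset.sum_filter,
      ← Equiv.sum_comp (Fin.snocEquiv (fun _ => Fin 2))
        (fun a : Fin (ℓ+1) → Fin 2 => if ones a = k then Wgen α a else 0),
      Fintype.sum_prod_type, Fin.sum_univ_two]
    simp only [hsnoc]
    have e0 : ∀ b : Fin ℓ → Fin 2,
        (if ones (Fin.snoc b (0 : Fin 2)) = k then Wgen α (Fin.snoc b (0 : Fin 2)) else 0)
          = (if ones b = k then α k * Wgen α b else 0) := by
      intro b
      rw [ones_snoc, Wgen_snoc]
      norm_num
      split_ifs with h
      · rw [h]; ring
      · rfl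
    have e1 : ∀ b : Fin ℓ → Fin 2,
        (if ones (Fin.snoc b (1 : Fin 2)) = k then Wgen α (Fin.snoc b (1 : Fin 2)) else 0)
          = (if ones b + 1 = k then Wgen α b else 0) := by
      intro b
      rw [ones_snoc, Wgen_snoc]
      norm_num
    rw [Finset.sum_congr rfl (fun b _ => e0 b), Finset.sum_congr rfl (fun b _ => e1 b)]
    cases k with
    | zero =>
      have : ∑ b : Fin ℓ → Fin 2, (if ones b + 1 = 0 then Wgen α b else 0) = 0 := by
        apply Finset.sum_eq_zero; intro b _; simp
      rw [this, add_zero]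
      simp only [DD]
      rw [← IH 0, Finset.sum_filter, Finset.mul_sum]
      apply Finset.sum_congr rfl
      intro b _
      split_ifs <;> simp
    | succ k =>
      simp only [DD]
      rw [← IH (k+1), ← IH k, Finset.sum_filter, Finset.sum_filter, Finset.mul_sum]
      congr 1
      · apply Finset.sum_congr rfl
        intro b _
        split_ifs <;> simp
      · apply Finset.sum_congr rfl
        intro b _
        simp only [Nat.add_left_inj]

lemma DD_congr (α α' : ℕ → ℝ) (ℓ : ℕ) : ∀ k : ℕ, (∀ j ≤ k, α j = α' j) →
    DD α ℓ k = DD α' ℓ k := by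
  induction ℓ with
  | zero => intro k h; cases k <;> rfl
  | succ ℓ IH =>
    intro k h
    cases k with
    | zero => simp only [DD]; rw [IH 0 h, h 0 le_rfl]
    | succ k =>
      simp only [DD]
      rw [IH (k+1) h, IH k (fun j hj => h j (hj.trans (Nat.le_succ k))), h (k+1) le_rfl]

lemma wt_eq_Wgen (p q : ℝ) {m : ℕ} (a : Fin m → Fin 2) :
    wt p q a = Wgen (fun l => 1 + p * l + q * ((ones a - l : ℕ) : ℝ)) a := by
  unfold wt Wgen
  rw [Finset.prod_filter]
  apply Finset.prod_congr rfl
  intro i _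
  split_ifs with h
  · have hsum : (univ.filter (fun j => j < i ∧ a j = 1)).card
        + (univ.filter (fun j => i < j ∧ a j = 1)).card = ones a := by
      unfold ones
      rw [card_filter, card_filter, card_filter, ← Finset.sum_add_distrib]
      apply Finset.sum_congr rfl
      intro j _
      rcases lt_trichotomy j i with hj | hj | hj
      · simp [hj, asymm hj]
      · subst hj; simp [lt_irrefl, h]
      · simp [hj, asymm hj]
    have hgt : (univ.filter (fun j => i < j ∧ a j = 1)).card
        = ones a - (univ.filter (fun j => j < i ∧ a j = 1)).card := by omega
    rw [hgt]
  · rfl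

lemma fwdDiff_pow_eq_zero (d : ℝ) : ∀ ℓ k : ℕ, ℓ < k →
    (fwdDiff d)^[k] (fun t : ℝ => t ^ ℓ) = 0 := by
  intro ℓ
  induction ℓ using Nat.strong_induction_on with
  | _ ℓ IH =>
    intro k hk
    obtain ⟨k, rfl⟩ : ∃ k', k = k' + 1 := ⟨k - 1, by omega⟩
    rw [Function.iterate_succ_apply]
    cases ℓ with
    | zero =>
      have h0 : fwdDiff d (fun t : ℝ => t ^ 0) = 0 := by
        ext t; simp [fwdDiff]
      rw [h0]
      have hfix : fwdDiff d (0 : ℝ → ℝ) = 0 := by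
        ext t; simp [fwdDiff]
      exact Function.iterate_fixed hfix k
    | succ m =>
      have hΔ : fwdDiff d (fun t : ℝ => t ^ (m + 1))
          = ∑ r ∈ Finset.range (m + 1),
              (d ^ (m + 1 - r) * ((m + 1).choose r : ℝ)) • (fun t : ℝ => t ^ r) := by
        ext t
        simp only [fwdDiff, Finset.sum_apply, Pi.smul_apply, smul_eq_mul]
        rw [add_pow, Finset.sum_range_succ]
        simp only [Nat.choose_self, Nat.cast_one, mul_one, Nat.sub_self, pow_zero]
        rw [add_sub_cancel_right]
        exact Finset.sum_congr rfl fun r _ => by ring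
      rw [hΔ, fwdDiff_iter_finset_sum]
      apply Finset.sum_eq_zero
      intro r hr
      have hrm : r < m + 1 := Finset.mem_range.mp hr
      rw [fwdDiff_iter_const_smul, IH r hrm k (by omega), smul_zero]

lemma phi_eq_zero {β d : ℝ} (hd : d ≠ 0) {ℓ k : ℕ} (h : ℓ < k) : phi β d ℓ k = 0 := by
  have H0 : (0 : ℝ) = ∑ j ∈ Finset.range (k + 1),
      ((-1 : ℤ) ^ (k - j) * (k.choose j) : ℤ) • (β + j • d) ^ ℓ := by
    have H := fwdDiff_iter_eq_sum_shift d (fun t : ℝ => t ^ ℓ) k β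
    rwa [fwdDiff_pow_eq_zero d ℓ k h, Pi.zero_apply] at H
  have hphi : phi β d ℓ k = (d ^ k * (k.factorial : ℝ))⁻¹ * ∑ j ∈ Finset.range (k + 1),
      ((-1 : ℤ) ^ (k - j) * (k.choose j) : ℤ) • (β + j • d) ^ ℓ := by
    unfold phi
    rw [Finset.mul_sum]
    apply Finset.sum_congr rfl
    intro j hj
    have hjk : j ≤ k := by
      have := Finset.mem_range.mp hj; omega
    have hfac : ((k.choose j : ℝ)) * (j.factorial : ℝ) * ((k - j).factorial : ℝ)
        = (k.factorial : ℝ) := by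
      exact_mod_cast congrArg (fun n : ℕ => (n : ℝ))
        (Nat.choose_mul_factorial_mul_factorial hjk)
    have hchoose : (0:ℝ) < (k.choose j : ℝ) := by
      exact_mod_cast Nat.choose_pos hjk
    have hjf : ((j.factorial : ℝ)) ≠ 0 := by positivity
    have hkjf : (((k - j).factorial : ℝ)) ≠ 0 := by positivity
    have hkf : ((k.factorial : ℝ)) ≠ 0 := by positivity
    rw [zsmul_eq_mul, nsmul_eq_mul]
    push_cast
    rw [div_eq_iff (by positivity)]
    field_simp
    linear_combination (-((β + (j:ℝ) * d) ^ ℓ)) * hfac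
  rw [hphi, ← H0, mul_zero]

lemma phi_rec {d : ℝ} (hd : d ≠ 0) (β : ℝ) (ℓ k : ℕ) :
    (β + ((k : ℝ) + 1) * d) * phi β d ℓ (k + 1) + phi β d ℓ k = phi β d (ℓ + 1) (k + 1) := by
  have expand : phi β d (ℓ + 1) (k + 1) - (β + ((k : ℝ) + 1) * d) * phi β d ℓ (k + 1)
      = ∑ j ∈ Finset.range (k + 2), ((j : ℝ) - ((k : ℝ) + 1)) * d *
          ((-1 : ℝ) ^ (k + 1 - j) * (β + j * d) ^ ℓ
            / (d ^ (k + 1) * j.factorial * (k + 1 - j).factorial)) := by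
    unfold phi
    rw [Finset.mul_sum, ← Finset.sum_sub_distrib]
    apply Finset.sum_congr rfl
    intro j hj
    rw [pow_succ]
    ring
  have hlast : (((k + 1 : ℕ) : ℝ) - ((k : ℝ) + 1)) * d *
      ((-1 : ℝ) ^ (k + 1 - (k + 1)) * (β + (k + 1 : ℕ) * d) ^ ℓ
        / (d ^ (k + 1) * (k + 1).factorial * (k + 1 - (k + 1)).factorial)) = 0 := by
    push_cast; ring
  rw [Finset.sum_range_succ, hlast, add_zero] at expand
  have main : ∑ j ∈ Finset.range (k + 1), ((j : ℝ) - ((k : ℝ) + 1)) * d *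
      ((-1 : ℝ) ^ (k + 1 - j) * (β + j * d) ^ ℓ
        / (d ^ (k + 1) * j.factorial * (k + 1 - j).factorial)) = phi β d ℓ k := by
    unfold phi
    apply Finset.sum_congr rfl
    intro j hj
    have hjk : j ≤ k := by
      have := Finset.mem_range.mp hj; omega
    obtain ⟨m, rfl⟩ : ∃ m, k = j + m := ⟨k - j, by omega⟩
    have e1 : j + m + 1 - j = m + 1 := by omega
    have e2 : j + m - j = m := by omega
    rw [e1, e2, Nat.factorial_succ, pow_succ (-1 : ℝ) m, pow_succ d (j + m)]
    have hjf : ((j.factorial : ℝ)) ≠ 0 := by positivity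
    have hmf : ((m.factorial : ℝ)) ≠ 0 := by positivity
    have hm1 : ((m : ℝ) + 1) ≠ 0 := by positivity
    have hd' : d ^ (j + m) ≠ 0 := pow_ne_zero _ hd
    push_cast
    field_simp
    ring
  rw [main] at expand
  linarith [expand]

lemma DD_eq_phi {d : ℝ} (hd : d ≠ 0) (β : ℝ) : ∀ ℓ k : ℕ,
    DD (fun l => β + l * d) ℓ k = phi β d ℓ k := by
  intro ℓ
  induction ℓ with
  | zero =>
    intro k
    cases k with
    | zero => simp [DD, phi]
    | succ k =>
      simp only [DD]
      rw [phi_eq_zero hd (Nat.succ_pos k)]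
  | succ ℓ IH =>
    intro k
    cases k with
    | zero =>
      have e : ∀ L, phi β d L 0 = β ^ L := by
        intro L; unfold phi; simp
      simp only [DD]
      rw [IH 0, e, e]
      push_cast
      ring
    | succ k =>
      simp only [DD]
      rw [IH (k + 1), IH k]
      have := phi_rec hd β ℓ k
      push_cast
      push_cast at this
      linarith [this]

lemma R_eq_phi {p q : ℝ} (hpq : p ≠ q) (ℓ k : ℕ) :
    R (ℓ + 1) k p q = phi (1 + q * k) (p - q) ℓ k := by
  have hd : p - q ≠ 0 := sub_ne_zero.mpr hpq
  have h1 : R (ℓ + 1) k p q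
      = ∑ a ∈ univ.filter (fun a : Fin ℓ → Fin 2 => ones a = k),
          Wgen (fun l => 1 + p * l + q * ((k - l : ℕ) : ℝ)) a := by
    unfold R
    apply Finset.sum_congr rfl
    intro a ha
    rw [mem_filter] at ha
    rw [wt_eq_Wgen, ha.2]
  rw [h1, sum_Wgen, DD_congr _ (fun l => (1 + q * k) + l * (p - q)) ℓ k ?_, DD_eq_phi hd]
  intro j hj
  push_cast [Nat.cast_sub hj]
  ring

lemma hasSum_exp_real (t : ℝ) : HasSum (fun n => t ^ n / n.factorial) (Real.exp t) := by
  rw [Real.exp_eq_exp_ℝ]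
  exact NormedSpace.expSeries_div_hasSum_exp t

set_option maxHeartbeats 1000000

/-- the mixed bivariate generating function of the restricted partition
function. -/
theorem R_bivariate_egf (p q : ℝ) (hpq : p ≠ q) (x y : ℝ) :
    HasSum
      (fun ℓ : ℕ =>
        (∑ n ∈ Finset.range (ℓ + 1), R (ℓ + 1) n p q * x ^ n) * y ^ ℓ / (ℓ.factorial : ℝ))
      (Real.exp (y + x * (Real.exp (p * y) - Real.exp (q * y)) / (p - q))) := by
  have hd : p - q ≠ 0 := sub_ne_zero.mpr hpq
  set d : ℝ := p - q with hddef
  set A : ℝ := Real.exp (p * y) with hAdef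
  set B : ℝ := Real.exp (q * y) with hBdef
  set G : ℕ × ℕ → ℝ := fun kl =>
    x ^ kl.1 * phi (1 + q * kl.1) d kl.2 kl.1 * y ^ kl.2 / (kl.2.factorial : ℝ) with hGdef
  -- column sums (over ℓ, for fixed k)
  have hfib : ∀ k : ℕ, HasSum (fun ℓ => G (k, ℓ))
      (Real.exp y * (x * (A - B) / d) ^ k / (k.factorial : ℝ)) := by
    intro k
    have hterm : (fun ℓ : ℕ => G (k, ℓ)) = fun ℓ : ℕ => ∑ j ∈ Finset.range (k + 1),
        (x ^ k * (-1 : ℝ) ^ (k - j) / (d ^ k * j.factorial * (k - j).factorial)) *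
          (((1 + q * k + j * d) * y) ^ ℓ / (ℓ.factorial : ℝ)) := by
      funext ℓ
      simp only [hGdef]
      unfold phi
      rw [Finset.mul_sum, Finset.sum_mul, Finset.sum_div]
      apply Finset.sum_congr rfl
      intro j hj
      rw [mul_pow]
      ring
    have H : HasSum (fun ℓ : ℕ => ∑ j ∈ Finset.range (k + 1),
        (x ^ k * (-1 : ℝ) ^ (k - j) / (d ^ k * j.factorial * (k - j).factorial)) *
          (((1 + q * k + j * d) * y) ^ ℓ / (ℓ.factorial : ℝ)))
        (∑ j ∈ Finset.range (k + 1),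
          (x ^ k * (-1 : ℝ) ^ (k - j) / (d ^ k * j.factorial * (k - j).factorial)) *
            Real.exp ((1 + q * k + j * d) * y)) :=
      hasSum_sum (fun j _ => (hasSum_exp_real _).mul_left _)
    have hval : ∑ j ∈ Finset.range (k + 1),
        (x ^ k * (-1 : ℝ) ^ (k - j) / (d ^ k * j.factorial * (k - j).factorial)) *
          Real.exp ((1 + q * k + j * d) * y)
        = Real.exp y * (x * (A - B) / d) ^ k / (k.factorial : ℝ) := by
      have hAB : (x * (A - B) / d) ^ k = x ^ k * (∑ j ∈ Finset.range (k + 1),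
          A ^ j * (-B) ^ (k - j) * (k.choose j : ℝ)) / d ^ k := by
        rw [div_pow, mul_pow, sub_eq_add_neg, add_pow]
      rw [hAB, Finset.mul_sum, Finset.sum_div, Finset.mul_sum, Finset.sum_div]
      apply Finset.sum_congr rfl
      intro j hj
      have hjk : j ≤ k := by have := Finset.mem_range.mp hj; omega
      have hexp : (1 + q * k + j * d) * y = y + j * (p * y) + ((k - j : ℕ) : ℝ) * (q * y) := by
        rw [Nat.cast_sub hjk, hddef]; ring
      rw [hexp, Real.exp_add, Real.exp_add, Real.exp_nat_mul, Real.exp_nat_mul]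
      have hfac : ((k.choose j : ℝ)) * (j.factorial : ℝ) * ((k - j).factorial : ℝ)
          = (k.factorial : ℝ) := by
        exact_mod_cast congrArg (fun n : ℕ => (n : ℝ))
          (Nat.choose_mul_factorial_mul_factorial hjk)
      have hnB : (-B) ^ (k - j) = (-1 : ℝ) ^ (k - j) * B ^ (k - j) := by rw [neg_pow]
      rw [hnB, ← hAdef, ← hBdef]
      have h1 : (d : ℝ) ^ k ≠ 0 := pow_ne_zero _ hd
      have h2 : ((j.factorial : ℝ)) ≠ 0 := by positivity
      have h3 : (((k - j).factorial : ℝ)) ≠ 0 := by positivity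
      have h4 : ((k.factorial : ℝ)) ≠ 0 := by positivity
      field_simp
      linear_combination (-(x ^ k * A ^ j * B ^ (k - j))) * hfac
    rw [hterm, ← hval]
    exact H
  -- row sums (over k, for fixed ℓ)
  have hrow : ∀ ℓ : ℕ, HasSum (fun k => G (k, ℓ))
      ((∑ n ∈ Finset.range (ℓ + 1), R (ℓ + 1) n p q * x ^ n) * y ^ ℓ / (ℓ.factorial : ℝ)) := by
    intro ℓ
    have hz : ∀ k ∉ Finset.range (ℓ + 1), G (k, ℓ) = 0 := by
      intro k hk
      have hlt : ℓ < k := by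
        have := Finset.mem_range.not.mp hk; omega
      simp only [hGdef]
      rw [phi_eq_zero hd hlt]
      ring
    have H := hasSum_sum_of_ne_finset_zero (L := SummationFilter.unconditional ℕ) hz
    have hsum : ∑ k ∈ Finset.range (ℓ + 1), G (k, ℓ)
        = (∑ n ∈ Finset.range (ℓ + 1), R (ℓ + 1) n p q * x ^ n) * y ^ ℓ / (ℓ.factorial : ℝ) := by
      rw [Finset.sum_mul, Finset.sum_div]
      apply Finset.sum_congr rfl
      intro k _
      rw [R_eq_phi hpq, ← hddef]
      simp only [hGdef]
      ring
    rwa [hsum] at H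
  -- absolute summability
  set M : ℝ := |q| + |d| with hMdef
  set bnd : ℕ → ℝ := fun k => 2 ^ k * |x| ^ k / (|d| ^ k * (k.factorial : ℝ)) with hbnddef
  set r : ℕ → ℝ := fun k => (1 + M * k) * |y| with hrdef
  have hphile : ∀ k ℓ : ℕ, |phi (1 + q * k) d ℓ k|
      ≤ 2 ^ k * (1 + M * k) ^ ℓ / (|d| ^ k * (k.factorial : ℝ)) := by
    intro k ℓ
    calc |phi (1 + q * k) d ℓ k|
        ≤ ∑ j ∈ Finset.range (k + 1),
            |(-1 : ℝ) ^ (k - j) * (1 + q * k + j * d) ^ ℓ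
              / (d ^ k * j.factorial * (k - j).factorial)| := by
          unfold phi; exact Finset.abs_sum_le_sum_abs _ _
      _ ≤ ∑ j ∈ Finset.range (k + 1),
            (1 + M * k) ^ ℓ * ((k.choose j : ℝ) / (|d| ^ k * (k.factorial : ℝ))) := by
          apply Finset.sum_le_sum
          intro j hj
          have hjk : j ≤ k := by have := Finset.mem_range.mp hj; omega
          have hfac : ((k.choose j : ℝ)) * (j.factorial : ℝ) * ((k - j).factorial : ℝ)
              = (k.factorial : ℝ) := by
            exact_mod_cast congrArg (fun n : ℕ => (n : ℝ))
              (Nat.choose_mul_factorial_mul_factorial hjk)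
          have hb : |1 + q * k + j * d| ≤ 1 + M * k := by
            have c1 : |1 + q * k + j * d| ≤ |1 + q * (k : ℝ)| + |(j : ℝ) * d| := abs_add_le _ _
            have c2 : |1 + q * (k : ℝ)| ≤ |(1 : ℝ)| + |q * (k : ℝ)| := abs_add_le _ _
            have c3 : ((j : ℝ)) ≤ (k : ℝ) := by exact_mod_cast hjk
            have c4 : (0 : ℝ) ≤ |d| := abs_nonneg d
            have c5 : |q * (k : ℝ)| = |q| * k := by
              rw [abs_mul, Nat.abs_cast]
            have c6 : |(j : ℝ) * d| = (j : ℝ) * |d| := by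
              rw [abs_mul, Nat.abs_cast]
            have c7 : ((j : ℝ)) * |d| ≤ (k : ℝ) * |d| := by
              apply mul_le_mul_of_nonneg_right c3 c4
            rw [hMdef]
            rw [abs_one] at c2
            nlinarith [c1, c2, c5, c6, c7]
          have habs : |(-1 : ℝ) ^ (k - j) * (1 + q * k + j * d) ^ ℓ
              / (d ^ k * j.factorial * (k - j).factorial)|
              = |1 + q * k + j * d| ^ ℓ
                / (|d| ^ k * (j.factorial : ℝ) * ((k - j).factorial : ℝ)) := by
            rw [abs_div, abs_mul, abs_pow, abs_pow, abs_neg, abs_one, one_pow, one_mul,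
              abs_mul, abs_mul, abs_pow, Nat.abs_cast, Nat.abs_cast]
          rw [habs]
          have hple : |1 + q * k + j * d| ^ ℓ ≤ (1 + M * k) ^ ℓ :=
            pow_le_pow_left₀ (abs_nonneg _) hb ℓ
          have hden : (1 : ℝ) / (|d| ^ k * (j.factorial : ℝ) * ((k - j).factorial : ℝ))
              = (k.choose j : ℝ) / (|d| ^ k * (k.factorial : ℝ)) := by
            have h2 : ((j.factorial : ℝ)) ≠ 0 := by positivity
            have h3 : (((k - j).factorial : ℝ)) ≠ 0 := by positivity
            have h4 : ((k.factorial : ℝ)) ≠ 0 := by positivity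
            have h5 : (|d| : ℝ) ^ k ≠ 0 := pow_ne_zero _ (abs_ne_zero.mpr hd)
            field_simp
            linear_combination (-1 : ℝ) * hfac
          calc |1 + q * k + j * d| ^ ℓ
              / (|d| ^ k * (j.factorial : ℝ) * ((k - j).factorial : ℝ))
              = |1 + q * k + j * d| ^ ℓ
                * (1 / (|d| ^ k * (j.factorial : ℝ) * ((k - j).factorial : ℝ))) := by ring
            _ ≤ (1 + M * k) ^ ℓ * ((k.choose j : ℝ) / (|d| ^ k * (k.factorial : ℝ))) := by
                rw [hden]
                apply mul_le_mul_of_nonneg_right hple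
                positivity
      _ = 2 ^ k * (1 + M * k) ^ ℓ / (|d| ^ k * (k.factorial : ℝ)) := by
          rw [← Finset.mul_sum, ← Finset.sum_div]
          have : ∑ j ∈ Finset.range (k + 1), (k.choose j : ℝ) = 2 ^ k := by
            exact_mod_cast congrArg (fun n : ℕ => (n : ℝ)) (Nat.sum_range_choose k)
          rw [this]
          ring
  have hGb : ∀ k ℓ : ℕ, |G (k, ℓ)| ≤ bnd k * (r k ^ ℓ / (ℓ.factorial : ℝ)) := by
    intro k ℓ
    have hGabs : |G (k, ℓ)| = |x| ^ k * |phi (1 + q * k) d ℓ k| * |y| ^ ℓ / (ℓ.factorial : ℝ) := by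
      simp only [hGdef]
      rw [abs_div, abs_mul, abs_mul, abs_pow, abs_pow, Nat.abs_cast]
    have hrhs : bnd k * (r k ^ ℓ / (ℓ.factorial : ℝ))
        = |x| ^ k * (2 ^ k * (1 + M * k) ^ ℓ / (|d| ^ k * (k.factorial : ℝ))) * |y| ^ ℓ
          / (ℓ.factorial : ℝ) := by
      simp only [hbnddef, hrdef]
      rw [mul_pow]
      ring
    rw [hGabs, hrhs]
    gcongr
    exact hphile k ℓ
  have hb1 : ∀ k, Summable (fun ℓ => |G (k, ℓ)|) := by
    intro k
    exact Summable.of_nonneg_of_le (fun ℓ => abs_nonneg _) (hGb k)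
      ((Real.summable_pow_div_factorial (r k)).mul_left (bnd k))
  have hmaj : ∀ k, ∑' ℓ, |G (k, ℓ)|
      ≤ Real.exp |y| * ((2 * |x| / |d| * Real.exp (M * |y|)) ^ k / (k.factorial : ℝ)) := by
    intro k
    have h1 : ∑' ℓ, |G (k, ℓ)| ≤ ∑' ℓ, bnd k * (r k ^ ℓ / (ℓ.factorial : ℝ)) :=
      Summable.tsum_le_tsum (hGb k) (hb1 k)
        ((Real.summable_pow_div_factorial (r k)).mul_left (bnd k))
    have h2 : ∑' ℓ, bnd k * (r k ^ ℓ / (ℓ.factorial : ℝ)) = bnd k * Real.exp (r k) :=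
      ((hasSum_exp_real (r k)).mul_left (bnd k)).tsum_eq
    have h3 : bnd k * Real.exp (r k)
        = Real.exp |y| * ((2 * |x| / |d| * Real.exp (M * |y|)) ^ k / (k.factorial : ℝ)) := by
      have hre : r k = |y| + (k : ℝ) * (M * |y|) := by simp only [hrdef]; ring
      rw [hre, Real.exp_add, Real.exp_nat_mul]
      simp only [hbnddef]
      rw [mul_pow, div_pow, mul_pow]
      field_simp
    rw [h2, h3] at h1
    exact h1
  have habs : Summable (fun kl : ℕ × ℕ => |G kl|) := by
    rw [summable_prod_of_nonneg (fun kl => abs_nonneg _)]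
    constructor
    · exact fun k => hb1 k
    · exact Summable.of_nonneg_of_le (fun k => tsum_nonneg (fun ℓ => abs_nonneg _)) hmaj
        ((Real.summable_pow_div_factorial _).mul_left _)
  have hsumG : Summable G := summable_abs_iff.mp habs
  have hGtotal : HasSum G (∑' kl, G kl) := hsumG.hasSum
  have hcols : HasSum (fun k => Real.exp y * (x * (A - B) / d) ^ k / (k.factorial : ℝ))
      (∑' kl, G kl) := hGtotal.prod_fiberwise hfib
  have hcol : HasSum (fun k => Real.exp y * (x * (A - B) / d) ^ k / (k.factorial : ℝ))
      (Real.exp (y + x * (A - B) / d)) := by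
    have h := (hasSum_exp_real (x * (A - B) / d)).mul_left (Real.exp y)
    rw [Real.exp_add]
    simpa [mul_div_assoc] using h
  have hTeq : (∑' kl, G kl) = Real.exp (y + x * (A - B) / d) := hcols.unique hcol
  have hswap : HasSum (fun lk : ℕ × ℕ => G (lk.2, lk.1)) (Real.exp (y + x * (A - B) / d)) := by
    have h2 : HasSum G (Real.exp (y + x * (A - B) / d)) := hTeq ▸ hGtotal
    have h3 := ((Equiv.prodComm ℕ ℕ).hasSum_iff).mpr h2
    exact h3
  exact hswap.prod_fiberwise hrow
end

section
/- For all integers L > n ≥ 0, the restricted partition function evaluated at p = 1, q = 0 equals the Stirling number of the second kind: R(L, n; 1, 0) = S(L, n+1), the number of set partitions of an L-element set into exactly n+1 nonempty blocks. -/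
open Finset

/-- The Stirling number of the second kind `S(m, k)`: the number of partitions of an
`m`-element set into exactly `k` nonempty blocks. -/
noncomputable def stirling (m k : ℕ) : ℕ :=
  (univ.filter
    (fun P : Finpartition (univ : Finset (Fin m)) => P.parts.card = k)).card


namespace RGS

variable {N : ℕ}

/-- set of values taken by `g` on positions `< k` -/
def D (g : Fin (N+1) → ℕ) (k : ℕ) : Finset ℕ :=
  (univ.filter (fun j : Fin (N+1) => (j : ℕ) < k)).image g

def cnt (g : Fin (N+1) → ℕ) (k : ℕ) : ℕ := (D g k).card

/-- restricted growth condition -/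
def C (g : Fin (N+1) → ℕ) : Prop := ∀ i : Fin (N+1), g i ≤ cnt g (i : ℕ)

/-- extracted word -/
def wrd (g : Fin (N+1) → ℕ) : Fin N → Fin 2 :=
  fun i => if g i.succ = cnt g ((i : ℕ) + 1) then 1 else 0

def mcount (a : Fin N → Fin 2) (k : ℕ) : ℕ :=
  (univ.filter (fun j : Fin N => (j : ℕ) < k ∧ a j = 1)).card

/-- allowed value sets -/
def F (a : Fin N → Fin 2) : Fin (N+1) → Finset ℕ :=
  Fin.cases {0} (fun j => if a j = 1 then {1 + mcount a (j : ℕ)}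
    else Finset.range (1 + mcount a (j : ℕ)))

lemma D_zero (g : Fin (N+1) → ℕ) : D g 0 = ∅ := by
  simp [D]

lemma D_succ (g : Fin (N+1) → ℕ) {k : ℕ} (hk : k < N + 1) :
    D g (k+1) = insert (g ⟨k, hk⟩) (D g k) := by
  unfold D
  rw [show (univ.filter (fun j : Fin (N+1) => (j : ℕ) < k + 1))
      = insert (⟨k, hk⟩ : Fin (N+1)) (univ.filter (fun j : Fin (N+1) => (j : ℕ) < k)) by
    ext j
    simp only [mem_filter, mem_insert, mem_univ, true_and]
    constructor
    · intro hj
      rcases Nat.lt_succ_iff_lt_or_eq.1 hj with h | h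
      · exact Or.inr h
      · exact Or.inl (Fin.ext h)
    · rintro (rfl | hj)
      · exact Nat.lt_succ_self k
      · exact hj.trans (Nat.lt_succ_self k)]
  rw [image_insert]

lemma D_top (g : Fin (N+1) → ℕ) : D g (N+1) = univ.image g := by
  unfold D
  congr 1
  ext j; simp [j.isLt]; exact Nat.le_of_lt_succ j.isLt

lemma D_mono (g : Fin (N+1) → ℕ) {k l : ℕ} (h : k ≤ l) : D g k ⊆ D g l := by
  apply image_subset_image
  intro j hj
  simp only [mem_filter, mem_univ, true_and] at hj ⊢
  omega

lemma mcount_succ (a : Fin N → Fin 2) {k : ℕ} (hk : k < N) :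
    mcount a (k+1) = mcount a k + (if a ⟨k, hk⟩ = 1 then 1 else 0) := by
  unfold mcount
  by_cases ha : a ⟨k, hk⟩ = 1
  · rw [if_pos ha]
    rw [show (univ.filter (fun j : Fin N => (j : ℕ) < k + 1 ∧ a j = 1))
        = insert (⟨k, hk⟩ : Fin N) (univ.filter (fun j : Fin N => (j : ℕ) < k ∧ a j = 1)) by
      ext j
      simp only [mem_filter, mem_insert, mem_univ, true_and]
      constructor
      · rintro ⟨hj, hj1⟩
        rcases Nat.lt_succ_iff_lt_or_eq.1 hj with h | h
        · exact Or.inr ⟨h, hj1⟩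
        · exact Or.inl (Fin.ext h)
      · rintro (rfl | ⟨hj, hj1⟩)
        · exact ⟨Nat.lt_succ_self k, ha⟩
        · exact ⟨hj.trans (Nat.lt_succ_self k), hj1⟩]
    rw [card_insert_of_notMem (by
      simp only [mem_filter, mem_univ, true_and]
      intro hc
      exact absurd hc.1 (lt_irrefl k))]
  · rw [if_neg ha]
    simp only [Nat.add_zero]
    apply congrArg Finset.card
    ext j
    simp only [mem_filter, mem_univ, true_and, and_congr_left_iff]
    intro hj1
    constructor
    · intro hj
      rcases Nat.lt_succ_iff_lt_or_eq.1 hj with h | h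
      · exact h
      · exact absurd hj1 (by rw [show j = ⟨k, hk⟩ from Fin.ext h]; exact ha)
    · intro hj; exact hj.trans (Nat.lt_succ_self k)



lemma mcount_zero (a : Fin N → Fin 2) : mcount a 0 = 0 := by
  simp [mcount]

lemma fin2 (x : Fin 2) : x = 0 ∨ x = 1 := by omega

lemma D_eq_range {g : Fin (N+1) → ℕ} (hg : C g) :
    ∀ k, k ≤ N + 1 → D g k = Finset.range (cnt g k) := by
  intro k
  induction k with
  | zero => intro _; simp [D_zero, cnt]
  | succ k ih =>
    intro hk1
    have hk : k < N + 1 := hk1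
    have ihr := ih (Nat.le_of_lt hk1)
    have hle : g ⟨k, hk⟩ ≤ cnt g k := hg ⟨k, hk⟩
    rcases lt_or_eq_of_le hle with hlt | heq
    · have habs : D g (k+1) = D g k := by
        rw [D_succ g hk, ihr, insert_eq_self]
        exact mem_range.2 hlt
      rw [habs, ihr]
      unfold cnt
      rw [habs]
    · have : D g (k+1) = Finset.range (cnt g k + 1) := by
        rw [D_succ g hk, ihr, heq, Finset.range_add_one]
      rw [this]
      unfold cnt
      rw [this, Finset.card_range]
      rfl

lemma cnt_succ {g : Fin (N+1) → ℕ} (hg : C g) {k : ℕ} (hk : k < N + 1) :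
    cnt g (k+1) = cnt g k + (if g ⟨k, hk⟩ = cnt g k then 1 else 0) := by
  have hr := D_eq_range hg k (Nat.le_of_lt hk)
  by_cases h : g ⟨k, hk⟩ = cnt g k
  · rw [if_pos h]
    have hD : D g (k+1) = Finset.range (cnt g k + 1) := by
      rw [D_succ g hk, hr, h, Finset.range_add_one]
    show (D g (k+1)).card = _
    rw [hD, Finset.card_range]
  · rw [if_neg h, Nat.add_zero]
    have hD : D g (k+1) = Finset.range (cnt g k) := by
      rw [D_succ g hk, hr, insert_eq_self]
      exact mem_range.2 (lt_of_le_of_ne (hg ⟨k, hk⟩) h)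
    show (D g (k+1)).card = _
    rw [hD, Finset.card_range]
    rfl

lemma cnt_zero (g : Fin (N+1) → ℕ) : cnt g 0 = 0 := by
  show (D g 0).card = 0
  rw [D_zero]
  rfl

lemma cnt_one {g : Fin (N+1) → ℕ} (hg : C g) : cnt g 1 = 1 := by
  have h0 : g ⟨0, Nat.succ_pos N⟩ = 0 := by
    have h := hg ⟨0, Nat.succ_pos N⟩
    rw [show ((⟨0, Nat.succ_pos N⟩ : Fin (N+1)) : ℕ) = 0 from rfl, cnt_zero] at h
    omega
  show (D g 1).card = 1
  rw [D_succ g (Nat.succ_pos N), D_zero, h0]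
  simp

lemma cnt_eq_mcount {g : Fin (N+1) → ℕ} (hg : C g) :
    ∀ k, k ≤ N → cnt g (k+1) = 1 + mcount (wrd g) k := by
  intro k
  induction k with
  | zero => intro _; rw [cnt_one hg, mcount_zero]
  | succ k ih =>
    intro hk1
    have hkN : k < N := hk1
    have ihr := ih (Nat.le_of_lt hk1)
    have hsucc : (⟨k, hkN⟩ : Fin N).succ = ⟨k+1, Nat.succ_lt_succ hkN⟩ := rfl
    rw [cnt_succ hg (Nat.succ_lt_succ hkN), mcount_succ (wrd g) hkN, ihr]
    by_cases h : g ⟨k+1, Nat.succ_lt_succ hkN⟩ = 1 + mcount (wrd g) k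
    · have hc : g (⟨k, hkN⟩ : Fin N).succ = cnt g (((⟨k, hkN⟩ : Fin N) : ℕ) + 1) := by
        rw [hsucc]
        show g ⟨k+1, Nat.succ_lt_succ hkN⟩ = cnt g (k+1)
        rw [ihr]; exact h
      have hw1 : wrd g ⟨k, hkN⟩ = 1 := if_pos hc
      rw [if_pos h, if_pos hw1]
      omega
    · have hc : ¬ g (⟨k, hkN⟩ : Fin N).succ = cnt g (((⟨k, hkN⟩ : Fin N) : ℕ) + 1) := by
        rw [hsucc]
        show ¬ g ⟨k+1, Nat.succ_lt_succ hkN⟩ = cnt g (k+1)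
        rw [ihr]; exact h
      have hw0 : wrd g ⟨k, hkN⟩ = 0 := if_neg hc
      have hw1 : ¬ wrd g ⟨k, hkN⟩ = 1 := by rw [hw0]; decide
      rw [if_neg h, if_neg hw1]
      omega

lemma mem_F_of_C {g : Fin (N+1) → ℕ} (hg : C g) : ∀ i, g i ∈ F (wrd g) i := by
  intro i
  induction i using Fin.cases with
  | zero =>
    have := hg 0
    simp only [cnt, Fin.val_zero, D_zero] at this
    simp only [F, Fin.cases_zero]
    simp only [Finset.card_empty, Nat.le_zero] at this
    simp [this]
  | succ j =>
    simp only [F, Fin.cases_succ]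
    have hj : (j : ℕ) < N := j.isLt
    have hcnt : cnt g ((j : ℕ)+1) = 1 + mcount (wrd g) (j : ℕ) :=
      cnt_eq_mcount hg (j : ℕ) (Nat.le_of_lt hj)
    have hle : g j.succ ≤ cnt g ((j : ℕ)+1) := by
      have := hg j.succ
      simpa using this
    by_cases h : g j.succ = cnt g ((j : ℕ)+1)
    · have hw : wrd g j = 1 := by simp [wrd, h]
      rw [if_pos hw, mem_singleton, h, hcnt]
    · have hw : wrd g j = 0 := by simp [wrd, h]
      have : wrd g j ≠ 1 := by rw [hw]; decide
      rw [if_neg this, mem_range, ← hcnt]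
      exact lt_of_le_of_ne hle h

lemma D_of_mem_F {g : Fin (N+1) → ℕ} {a : Fin N → Fin 2} (h : ∀ i, g i ∈ F a i) :
    ∀ k, k ≤ N → D g (k+1) = Finset.range (1 + mcount a k) := by
  intro k
  induction k with
  | zero =>
    intro _
    have h0 := h 0
    simp only [F, Fin.cases_zero, mem_singleton] at h0
    rw [D_succ g (Nat.succ_pos N), D_zero, mcount_zero]
    rw [show (0 : Fin (N+1)) = ⟨0, Nat.succ_pos N⟩ from rfl] at h0
    rw [h0]
    rfl
  | succ k ih =>
    intro hk1
    have hkN : k < N := hk1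
    have ihr := ih (Nat.le_of_lt hk1)
    have hj := h (⟨k, hkN⟩ : Fin N).succ
    simp only [F, Fin.cases_succ] at hj
    have hsucc : ((⟨k, hkN⟩ : Fin N).succ : Fin (N+1)) = ⟨k+1, Nat.succ_lt_succ hkN⟩ := rfl
    rw [hsucc] at hj
    rw [D_succ g (Nat.succ_lt_succ hkN), ihr, mcount_succ a hkN]
    by_cases ha : a ⟨k, hkN⟩ = 1
    · rw [if_pos ha, mem_singleton] at hj
      rw [hj, if_pos ha, ← Finset.range_add_one]
      congr 1
    · rw [if_neg ha, mem_range] at hj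
      rw [insert_eq_self.2 (mem_range.2 hj), if_neg ha]
      congr 1

lemma C_of_mem_F {g : Fin (N+1) → ℕ} {a : Fin N → Fin 2} (h : ∀ i, g i ∈ F a i) :
    C g ∧ wrd g = a := by
  have hcnt : ∀ k, k ≤ N → cnt g (k+1) = 1 + mcount a k := by
    intro k hk
    unfold cnt
    rw [D_of_mem_F h k hk, Finset.card_range]
  have hC : C g := by
    intro i
    induction i using Fin.cases with
    | zero =>
      have h0 := h 0
      simp only [F, Fin.cases_zero, mem_singleton] at h0
      simp [h0]
    | succ j =>
      have hj := h j.succ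
      simp only [F, Fin.cases_succ] at hj
      have hv : (j.succ : ℕ) = (j : ℕ) + 1 := rfl
      rw [hv, hcnt (j : ℕ) (Nat.le_of_lt j.isLt)]
      by_cases ha : a j = 1
      · rw [if_pos ha, mem_singleton] at hj
        omega
      · rw [if_neg ha, mem_range] at hj
        omega
  refine ⟨hC, funext fun j => ?_⟩
  have hj := h j.succ
  simp only [F, Fin.cases_succ] at hj
  unfold wrd
  rw [hcnt (j : ℕ) (Nat.le_of_lt j.isLt)]
  by_cases ha : a j = 1
  · rw [if_pos ha, mem_singleton] at hj
    rw [if_pos hj, ha]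
  · rw [if_neg ha, mem_range] at hj
    rw [if_neg (by omega)]
    rcases fin2 (a j) with h0 | h1
    · rw [h0]
    · exact absurd h1 ha

-- fibers of g
def fib (g : Fin (N+1) → ℕ) (v : ℕ) : Finset (Fin (N+1)) :=
  univ.filter (fun j => g j = v)

lemma fib_nonempty {g : Fin (N+1) → ℕ} {v : ℕ} (hv : v ∈ univ.image g) :
    (fib g v).Nonempty := by
  obtain ⟨i, _, rfl⟩ := mem_image.1 hv
  exact ⟨i, by simp [fib]⟩

lemma fib_injOn (g : Fin (N+1) → ℕ) :
    Set.InjOn (fib g) (univ.image g : Finset ℕ) := by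
  intro v hv w hw hfib
  simp only [coe_image, Set.mem_image] at hv hw
  obtain ⟨i, _, rfl⟩ := hv
  have : i ∈ fib g (g i) := by simp [fib]
  rw [hfib] at this
  simpa [fib] using this

lemma mem_image_of_C {g : Fin (N+1) → ℕ} (hg : C g) {v : ℕ} :
    v ∈ univ.image g ↔ v < cnt g (N+1) := by
  rw [← D_top, D_eq_range hg (N+1) le_rfl, mem_range]

lemma minfib_lt {g : Fin (N+1) → ℕ} (hg : C g) {v w : ℕ}
    (hv : v ∈ univ.image g) (hw : w ∈ univ.image g) (hvw : v < w) :
    (fib g v).min' (fib_nonempty hv) < (fib g w).min' (fib_nonempty hw) := by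
  set i := (fib g w).min' (fib_nonempty hw) with hi
  have hgi : g i = w := by
    have := Finset.min'_mem (fib g w) (fib_nonempty hw)
    rw [← hi] at this
    exact (Finset.mem_filter.1 this).2
  have hnot : w ∉ D g (i : ℕ) := by
    intro hmem
    obtain ⟨j, hj, hjw⟩ := mem_image.1 hmem
    simp only [mem_filter, mem_univ, true_and] at hj
    have hjfib : j ∈ fib g w := by simp [fib, hjw]
    have := Finset.min'_le (fib g w) j hjfib
    rw [← hi] at this
    have : (i : ℕ) ≤ (j : ℕ) := this
    omega
  have hcnt : w = cnt g (i : ℕ) := by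
    rw [D_eq_range hg (i : ℕ) (Nat.le_of_lt i.isLt), mem_range] at hnot
    have := hg i
    omega
  have hvD : v ∈ D g (i : ℕ) := by
    rw [D_eq_range hg (i : ℕ) (Nat.le_of_lt i.isLt), mem_range]
    omega
  obtain ⟨j, hj, hjv⟩ := mem_image.1 hvD
  simp only [mem_filter, mem_univ, true_and] at hj
  have hjfib : j ∈ fib g v := by simp [fib, hjv]
  have hle := Finset.min'_le (fib g v) j hjfib
  exact lt_of_le_of_lt hle (by exact hj)

lemma minfib_lt_iff {g : Fin (N+1) → ℕ} (hg : C g) {v w : ℕ}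
    (hv : v ∈ univ.image g) (hw : w ∈ univ.image g) :
    (fib g v).min' (fib_nonempty hv) < (fib g w).min' (fib_nonempty hw) ↔ v < w := by
  constructor
  · intro hlt
    rcases lt_trichotomy v w with h | h | h
    · exact h
    · subst h; exact absurd hlt (lt_irrefl _)
    · exact absurd (minfib_lt hg hw hv h) (not_lt_of_gt hlt)
  · exact minfib_lt hg hv hw

-- Finpartition side
lemma parts_eq_image_part (P : Finpartition (univ : Finset (Fin (N+1)))) :
    P.parts = univ.image P.part := by
  apply Finset.Subset.antisymm
  · intro t ht
    obtain ⟨i, hit⟩ := P.nonempty_of_mem_parts ht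
    exact mem_image.2 ⟨i, mem_univ i, P.part_eq_of_mem ht hit⟩
  · intro t ht
    obtain ⟨i, _, rfl⟩ := mem_image.1 ht
    exact P.part_mem.2 (mem_univ i)

def rk (P : Finpartition (univ : Finset (Fin (N+1)))) (t : Finset (Fin (N+1))) : ℕ :=
  (P.parts.filter (fun u => u.min < t.min)).card

lemma rk_lt_rk {P : Finpartition (univ : Finset (Fin (N+1)))} {t u : Finset (Fin (N+1))}
    (ht : t ∈ P.parts) (h : t.min < u.min) : rk P t < rk P u := by
  apply Finset.card_lt_card
  constructor
  · intro v hv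
    simp only [mem_filter] at hv ⊢
    exact ⟨hv.1, hv.2.trans h⟩
  · intro hsub
    have : t ∈ P.parts.filter (fun u' => u'.min < u.min) := by
      simp only [mem_filter]; exact ⟨ht, h⟩
    have := hsub this
    simp only [mem_filter] at this
    exact absurd this.2 (lt_irrefl _)

lemma rk_inj {P : Finpartition (univ : Finset (Fin (N+1)))} {t u : Finset (Fin (N+1))}
    (ht : t ∈ P.parts) (hu : u ∈ P.parts) (h : rk P t = rk P u) : t = u := by
  rcases lt_trichotomy t.min u.min with hm | hm | hm
  · exact absurd h (Nat.ne_of_lt (rk_lt_rk ht hm))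
  · have hte := P.nonempty_of_mem_parts ht
    have hue := P.nonempty_of_mem_parts hu
    rw [← Finset.coe_min' hte, ← Finset.coe_min' hue] at hm
    have hmm : t.min' hte = u.min' hue := by exact_mod_cast hm
    exact P.eq_of_mem_parts ht hu (Finset.min'_mem t hte)
      (by rw [hmm]; exact Finset.min'_mem u hue)
  · exact absurd h.symm (Nat.ne_of_lt (rk_lt_rk hu hm))

lemma rk_lt_iff {P : Finpartition (univ : Finset (Fin (N+1)))} {t u : Finset (Fin (N+1))}
    (ht : t ∈ P.parts) (hu : u ∈ P.parts) : rk P t < rk P u ↔ t.min < u.min := by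
  constructor
  · intro hlt
    rcases lt_trichotomy t.min u.min with hm | hm | hm
    · exact hm
    · have : t = u := by
        have hte := P.nonempty_of_mem_parts ht
        have hue := P.nonempty_of_mem_parts hu
        rw [← Finset.coe_min' hte, ← Finset.coe_min' hue] at hm
        have hmm : t.min' hte = u.min' hue := by exact_mod_cast hm
        exact P.eq_of_mem_parts ht hu (Finset.min'_mem t hte)
          (by rw [hmm]; exact Finset.min'_mem u hue)
      rw [this] at hlt; exact absurd hlt (lt_irrefl _)
    · exact absurd (rk_lt_rk hu hm) (not_lt_of_gt hlt)
  · exact rk_lt_rk ht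

def Phi (P : Finpartition (univ : Finset (Fin (N+1)))) : Fin (N+1) → ℕ :=
  fun i => rk P (P.part i)

lemma Phi_min' {P : Finpartition (univ : Finset (Fin (N+1)))} {t : Finset (Fin (N+1))}
    (ht : t ∈ P.parts) (hte : t.Nonempty) : Phi P (t.min' hte) = rk P t := by
  unfold Phi
  rw [P.part_eq_of_mem ht (Finset.min'_mem t hte)]

lemma C_Phi (P : Finpartition (univ : Finset (Fin (N+1)))) : C (Phi P) := by
  intro i
  have hpe : (P.part i).Nonempty := ⟨i, P.mem_part (mem_univ i)⟩
  have hpm : P.part i ∈ P.parts := P.part_mem.2 (mem_univ i)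
  unfold Phi rk cnt
  apply Finset.card_le_card_of_injOn (fun t => rk P t)
  · intro t htf
    simp only [mem_coe, mem_filter] at htf
    obtain ⟨htp, htm⟩ := htf
    have hte := P.nonempty_of_mem_parts htp
    have hmin_lt : t.min' hte < i := by
      have h1 : t.min' hte < (P.part i).min' hpe := by
        rw [← Finset.coe_min' hte, ← Finset.coe_min' hpe] at htm
        exact_mod_cast htm
      exact lt_of_lt_of_le h1 (Finset.min'_le _ i (P.mem_part (mem_univ i)))
    apply mem_image.2
    refine ⟨t.min' hte, ?_, ?_⟩
    · simp only [mem_filter, mem_univ, true_and]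
      exact hmin_lt
    · exact Phi_min' htp hte
  · intro t htf u huf htu
    simp only [coe_filter] at htf huf
    exact rk_inj htf.1 huf.1 htu

-- Psi
def ker (g : Fin (N+1) → ℕ) : Setoid (Fin (N+1)) :=
  ⟨fun i j => g i = g j, ⟨fun _ => rfl, Eq.symm, Eq.trans⟩⟩

instance kerDec (g : Fin (N+1) → ℕ) : DecidableRel (ker g).r :=
  fun i j => Nat.decEq (g i) (g j)

def Psi (g : Fin (N+1) → ℕ) : Finpartition (univ : Finset (Fin (N+1))) :=
  Finpartition.ofSetoid (ker g)

lemma Psi_part (g : Fin (N+1) → ℕ) (i : Fin (N+1)) : (Psi g).part i = fib g (g i) := by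
  ext b
  rw [Psi, Finpartition.mem_part_ofSetoid_iff_rel]
  simp only [fib, mem_filter, mem_univ, true_and]
  exact ⟨Eq.symm, Eq.symm⟩

lemma Psi_parts (g : Fin (N+1) → ℕ) :
    (Psi g).parts = (univ.image g).image (fib g) := by
  rw [parts_eq_image_part (Psi g), Finset.image_image]
  apply Finset.image_congr
  intro i _
  exact Psi_part g i

lemma card_Psi_parts (g : Fin (N+1) → ℕ) :
    (Psi g).parts.card = (univ.image g).card := by
  rw [Psi_parts]
  exact Finset.card_image_of_injOn (fib_injOn g)

lemma Phi_Psi {g : Fin (N+1) → ℕ} (hg : C g) : Phi (Psi g) = g := by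
  funext i
  have hgi : g i ∈ univ.image g := mem_image.2 ⟨i, mem_univ i, rfl⟩
  unfold Phi rk
  rw [Psi_part g i, Psi_parts g, Finset.filter_image,
    Finset.card_image_of_injOn ((fib_injOn g).mono (by
      intro v hv
      simp only [coe_filter, Set.mem_setOf_eq] at hv
      exact_mod_cast (Finset.mem_coe.2 hv.1)))]
  have hfc : (univ.image g).filter (fun v => (fib g v).min < (fib g (g i)).min)
      = (univ.image g).filter (fun v => v < g i) := by
    apply Finset.filter_congr
    intro v hv
    rw [← Finset.coe_min' (fib_nonempty hv), ← Finset.coe_min' (fib_nonempty hgi),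
      ]
    exact_mod_cast minfib_lt_iff hg hv hgi
  rw [hfc]
  have himg : univ.image g = Finset.range (cnt g (N+1)) := by
    rw [← D_top, D_eq_range hg (N+1) le_rfl]
  have hgilt : g i < cnt g (N+1) := by
    rw [himg, mem_range] at hgi; exact hgi
  rw [himg]
  rw [show (Finset.range (cnt g (N+1))).filter (fun v => v < g i) = Finset.range (g i) by
    ext v
    simp only [mem_filter, mem_range]
    omega]
  exact Finset.card_range _

lemma Psi_Phi (P : Finpartition (univ : Finset (Fin (N+1)))) : Psi (Phi P) = P := by
  apply Finpartition.ext
  rw [Psi_parts, Finset.image_image]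
  rw [parts_eq_image_part P]
  apply Finset.image_congr
  intro i _
  show fib (Phi P) (Phi P i) = P.part i
  ext b
  simp only [fib, mem_filter, mem_univ, true_and]
  rw [P.mem_part_iff_part_eq_part (mem_univ b) (mem_univ i)]
  constructor
  · intro hb
    exact rk_inj (P.part_mem.2 (mem_univ b)) (P.part_mem.2 (mem_univ i)) hb
  · intro hb
    unfold Phi
    rw [hb]



lemma mcount_top (a : Fin N → Fin 2) : mcount a N = ones a := by
  unfold mcount ones
  apply congrArg Finset.card
  ext j
  simp [j.isLt]

lemma wt_eq (a : Fin N → Fin 2) :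
    wt 1 0 a = ((∏ j ∈ univ.filter (fun j => a j = 0), (1 + mcount a (j : ℕ)) : ℕ) : ℝ) := by
  unfold wt
  rw [Nat.cast_prod]
  apply Finset.prod_congr rfl
  intro i _
  have hcard : (univ.filter (fun j => j < i ∧ a j = 1)).card = mcount a (i : ℕ) := by
    apply congrArg Finset.card
    ext j
    simp only [mem_filter, mem_univ, true_and, mcount, Fin.lt_def]
  rw [hcard]
  push_cast
  ring

lemma card_piFinset_F (a : Fin N → Fin 2) :
    (Fintype.piFinset (F a)).card
      = ∏ j ∈ univ.filter (fun j => a j = 0), (1 + mcount a (j : ℕ)) := by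
  rw [Fintype.card_piFinset, Fin.prod_univ_succ]
  have h0 : (F a 0).card = 1 := by simp [F]
  rw [h0, one_mul, Finset.prod_filter]
  apply Finset.prod_congr rfl
  intro j _
  simp only [F, Fin.cases_succ]
  rcases fin2 (a j) with hj | hj
  · rw [if_neg (by rw [hj]; decide), if_pos hj, Finset.card_range]
  · rw [if_pos hj, if_neg (by rw [hj]; decide), Finset.card_singleton]

lemma key (N n : ℕ) :
    (∑ a ∈ univ.filter (fun a : Fin N → Fin 2 => ones a = n), wt 1 0 a)
      = ((univ.filter
          (fun P : Finpartition (univ : Finset (Fin (N+1))) => P.parts.card = n+1)).card : ℝ) := by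
  classical
  set words := univ.filter (fun a : Fin N → Fin 2 => ones a = n) with hwords
  set T := words.biUnion (fun a => Fintype.piFinset (F a)) with hT
  clear_value T words
  have hdisj : ∀ a ∈ words, ∀ b ∈ words, a ≠ b →
      Disjoint (Fintype.piFinset (F a)) (Fintype.piFinset (F b)) := by
    intro a _ b _ hab
    rw [Finset.disjoint_left]
    intro g hga hgb
    obtain ⟨_, hwa⟩ := C_of_mem_F (Fintype.mem_piFinset.1 hga)
    obtain ⟨_, hwb⟩ := C_of_mem_F (Fintype.mem_piFinset.1 hgb)
    exact hab (hwa ▸ hwb ▸ rfl)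
  have hcardT : T.card = ∑ a ∈ words, ∏ j ∈ univ.filter (fun j => a j = 0),
      (1 + mcount a (j : ℕ)) := by
    rw [hT, Finset.card_biUnion hdisj]
    exact Finset.sum_congr rfl (fun a _ => card_piFinset_F a)
  -- bijection between partitions and T
  have hbij : (univ.filter
      (fun P : Finpartition (univ : Finset (Fin (N+1))) => P.parts.card = n+1)).card
      = T.card := by
    apply Finset.card_bij' (fun P _ => Phi P) (fun g _ => Psi g)
    · -- Phi P ∈ T
      intro P hP
      rw [mem_filter] at hP
      have hC := C_Phi P
      have himg : univ.image (Phi P) = P.parts.image (rk P) := by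
        rw [parts_eq_image_part, Finset.image_image]
        rfl
      have hcnt : cnt (Phi P) (N+1) = P.parts.card := by
        show (D (Phi P) (N+1)).card = _
        rw [D_top, himg, Finset.card_image_of_injOn (fun t ht u hu h =>
          rk_inj (by exact_mod_cast ht) (by exact_mod_cast hu) h)]
      have hones : ones (wrd (Phi P)) = n := by
        have h1 := cnt_eq_mcount hC N le_rfl
        rw [mcount_top] at h1
        rw [hcnt, hP.2] at h1
        rw [Nat.add_comm 1] at h1
        exact Nat.succ_injective h1.symm
      rw [hT]
      apply Finset.mem_biUnion.2
      refine ⟨wrd (Phi P), ?_, ?_⟩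
      · rw [hwords, mem_filter]; exact ⟨mem_univ _, hones⟩
      · exact Fintype.mem_piFinset.2 (mem_F_of_C hC)
    · -- Psi g ∈ partitions
      intro g hg
      rw [hT] at hg
      obtain ⟨a, ha, hga⟩ := Finset.mem_biUnion.1 hg
      rw [hwords, mem_filter] at ha
      obtain ⟨hC, hwa⟩ := C_of_mem_F (Fintype.mem_piFinset.1 hga)
      rw [mem_filter]
      refine ⟨mem_univ _, ?_⟩
      rw [card_Psi_parts]
      have h1 : (univ.image g).card = cnt g (N+1) := by
        show _ = (D g (N+1)).card
        rw [D_top]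
      rw [h1, cnt_eq_mcount hC N le_rfl, mcount_top, hwa, ha.2]
      exact Nat.add_comm 1 n
    · intro P _; exact Psi_Phi P
    · intro g hg
      rw [hT] at hg
      obtain ⟨a, _, hga⟩ := Finset.mem_biUnion.1 hg
      exact Phi_Psi (C_of_mem_F (Fintype.mem_piFinset.1 hga)).1
  rw [hbij, hcardT, Nat.cast_sum]
  apply Finset.sum_congr rfl
  intro a _
  exact wt_eq a


end RGS

/-- at `p = 1`, `q = 0` the restricted partition function equals the
Stirling number of the second kind `S(L, n+1)`. -/
theorem R_one_zero_eq_stirling (L n : ℕ) (h : n < L) :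
    R L n 1 0 = (stirling L (n + 1) : ℝ) := by
  obtain ⟨N, rfl⟩ : ∃ N, L = N + 1 := ⟨L - 1, by omega⟩
  exact RGS.key N n
end

section
/- Let p be a nonzero real parameter and let L > n ≥ 0 be integers. Then the restricted partition function at q = 0 is given by R(L, n; p, 0) = p^{L−n−1} · S_{1/p}(L, n+1). -/
open Finset

/-- The `p`-weighted Stirling number `S_p(m, k)`: the sum over all set partitions of
`{1, …, m}` (encoded as `Fin m`) into exactly `k` nonempty blocks of
`p ^ (size of the block containing the first element, minus one)`. -/
noncomputable def pStirling (p : ℝ) (m k : ℕ) : ℝ :=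
  if h : 0 < m then
    ∑ P ∈ univ.filter
        (fun P : Finpartition (univ : Finset (Fin m)) => P.parts.card = k),
      p ^ ((P.part (⟨0, h⟩ : Fin m)).card - 1)
  else 0


namespace RQZ

open Fintype

variable {M : ℕ}

/-- The set of "roots": 0 together with successors of positions carrying a 1. -/
def Fx (a : Fin M → Fin 2) : Finset (Fin (M+1)) :=
  insert 0 ((univ.filter fun j => a j = 1).image Fin.succ)

/-- allowed values of `g x`. -/
def tx (a : Fin M → Fin 2) (x : Fin (M+1)) : Finset (Fin (M+1)) :=
  if x ∈ Fx a then {x}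
  else insert 0 ((univ.filter fun j => a j = 1 ∧ j.succ < x).image Fin.succ)

noncomputable def fw (p : ℝ) (x y : Fin (M+1)) : ℝ := if y = 0 ∨ y = x then 1 else p

lemma fin2 (v : Fin 2) : v = 0 ∨ v = 1 := by
  match v with
  | 0 => exact Or.inl rfl
  | 1 => exact Or.inr rfl

lemma mem_Fx {a : Fin M → Fin 2} {x : Fin (M+1)} :
    x ∈ Fx a ↔ x = 0 ∨ ∃ j, a j = 1 ∧ j.succ = x := by
  simp [Fx]

lemma zero_mem_Fx (a : Fin M → Fin 2) : (0 : Fin (M+1)) ∈ Fx a := mem_insert_self _ _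

lemma card_Fx (a : Fin M → Fin 2) : (Fx a).card = ones a + 1 := by
  rw [Fx, card_insert_of_notMem (by simp [Fin.succ_ne_zero]),
    card_image_of_injective _ (Fin.succ_injective M), ones]

lemma tx_subset {a : Fin M → Fin 2} {x y : Fin (M+1)} (hy : y ∈ tx a x) :
    y ∈ Fx a ∧ y ≤ x := by
  rw [tx] at hy
  split_ifs at hy with hx
  · rw [mem_singleton] at hy; subst hy; exact ⟨hx, le_rfl⟩
  · rcases mem_insert.1 hy with rfl | hy
    · exact ⟨zero_mem_Fx a, Fin.zero_le x⟩
    · obtain ⟨j, hj, rfl⟩ := mem_image.1 hy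
      rw [mem_filter] at hj
      exact ⟨mem_Fx.2 (Or.inr ⟨j, hj.2.1, rfl⟩), hj.2.2.le⟩

section gprops
variable {a : Fin M → Fin 2} {g : Fin (M+1) → Fin (M+1)} (hg : g ∈ piFinset (tx a))

include hg

lemma hgt (x : Fin (M+1)) : g x ∈ tx a x := mem_piFinset.1 hg x

lemma hgF (x : Fin (M+1)) : g x ∈ Fx a := (tx_subset (hgt hg x)).1

lemma hgle (x : Fin (M+1)) : g x ≤ x := (tx_subset (hgt hg x)).2

lemma hfix {x : Fin (M+1)} (hx : x ∈ Fx a) : g x = x := by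
  have := hgt hg x
  rw [tx, if_pos hx, mem_singleton] at this
  exact this

lemma hnonfix {x : Fin (M+1)} (hx : x ∉ Fx a) : g x ≠ x := by
  have := hgt hg x
  rw [tx, if_neg hx] at this
  rcases mem_insert.1 this with h0 | him
  · intro hgx; rw [hgx] at h0; exact hx (h0 ▸ zero_mem_Fx a)
  · obtain ⟨j, hj, hjx⟩ := mem_image.1 him
    rw [mem_filter] at hj
    intro hgx
    rw [hgx] at hjx
    exact absurd hjx (ne_of_lt hj.2.2)

lemma fix_iff_mem_Fx {x : Fin (M+1)} : g x = x ↔ x ∈ Fx a := by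
  constructor
  · intro hx; by_contra hc; exact hnonfix hg hc hx
  · exact hfix hg

lemma image_g_eq_Fx : univ.image g = Fx a := by
  apply Finset.Subset.antisymm
  · intro y hy
    obtain ⟨x, -, rfl⟩ := mem_image.1 hy
    exact hgF hg x
  · intro r hr
    exact mem_image.2 ⟨r, mem_univ r, hfix hg hr⟩

end gprops


lemma fw_self (p : ℝ) (x : Fin (M+1)) : fw p x x = 1 := if_pos (Or.inr rfl)

lemma sum_tx_fix {a : Fin M → Fin 2} {x : Fin (M+1)} (hx : x ∈ Fx a) (p : ℝ) :
    ∑ y ∈ tx a x, fw p x y = 1 := by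
  rw [tx, if_pos hx, sum_singleton, fw_self]

lemma sum_tx_nonfix {a : Fin M → Fin 2} {x : Fin (M+1)} (hx : x ∉ Fx a) (p : ℝ) :
    ∑ y ∈ tx a x, fw p x y
      = 1 + p * ((univ.filter fun j => a j = 1 ∧ j.succ < x).card : ℝ) := by
  rw [tx, if_neg hx, sum_insert (by simp [Fin.succ_ne_zero])]
  have h0 : fw p x 0 = 1 := if_pos (Or.inl rfl)
  have hp : ∀ y ∈ (univ.filter fun j => a j = 1 ∧ j.succ < x).image Fin.succ,
      fw p x y = p := by
    intro y hy
    obtain ⟨j, hj, rfl⟩ := mem_image.1 hy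
    rw [mem_filter] at hj
    rw [fw, if_neg]
    push_neg
    exact ⟨Fin.succ_ne_zero j, ne_of_lt hj.2.2⟩
  rw [h0, sum_congr rfl hp, sum_const,
    card_image_of_injective _ (Fin.succ_injective M), nsmul_eq_mul, mul_comm]

lemma compl_Fx (a : Fin M → Fin 2) :
    (Fx a)ᶜ = (univ.filter fun i => a i = 0).image Fin.succ := by
  ext x
  rw [mem_compl, mem_image]
  constructor
  · intro hx
    have hx0 : x ≠ 0 := fun h => hx (h ▸ zero_mem_Fx a)
    refine ⟨x.pred hx0, ?_, Fin.succ_pred x hx0⟩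
    rw [mem_filter]
    refine ⟨mem_univ _, ?_⟩
    rcases fin2 (a (x.pred hx0)) with h | h
    · exact h
    · exact absurd (mem_Fx.2 (Or.inr ⟨x.pred hx0, h, Fin.succ_pred x hx0⟩)) hx
  · rintro ⟨j, hj, rfl⟩ hmem
    rw [mem_filter] at hj
    rcases mem_Fx.1 hmem with h0 | ⟨k, hk, hks⟩
    · exact Fin.succ_ne_zero j h0
    · have hkj : k = j := Fin.succ_injective M hks
      subst hkj
      rw [hj.2] at hk
      exact absurd hk (by decide)

lemma wt_expand (p : ℝ) (a : Fin M → Fin 2) :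
    wt p 0 a = ∑ g ∈ piFinset (tx a), ∏ x, fw p x (g x) := by
  rw [← Finset.prod_univ_sum]
  rw [← prod_mul_prod_compl (Fx a) (fun x => ∑ y ∈ tx a x, fw p x y)]
  rw [prod_congr rfl (fun x hx => sum_tx_fix hx p), prod_const_one, one_mul]
  rw [compl_Fx, prod_image (fun i _ j _ h => Fin.succ_injective M h), wt]
  apply Finset.prod_congr rfl
  intro i hi
  rw [mem_filter] at hi
  have hns : i.succ ∉ Fx a := by
    rw [← mem_compl, compl_Fx]
    exact mem_image.2 ⟨i, mem_filter.2 ⟨mem_univ _, hi.2⟩, rfl⟩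
  rw [sum_tx_nonfix hns p, zero_mul, add_zero]
  have hfeq : (univ.filter fun j => j < i ∧ a j = 1)
      = (univ.filter fun j => a j = 1 ∧ j.succ < i.succ) := by
    ext j
    simp only [mem_filter, mem_univ, true_and, Fin.succ_lt_succ_iff, and_comm]
  rw [hfeq]

lemma min'_eq_of_eq {α : Type*} [LinearOrder α] (s t : Finset α) (h : s = t)
    (hs : s.Nonempty) (ht : t.Nonempty) : s.min' hs = t.min' ht := by
  subst h; rfl

lemma parts_eq_image_part {α : Type*} [DecidableEq α] [Fintype α]
    (P : Finpartition (univ : Finset α)) : P.parts = univ.image P.part := by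
  ext b
  constructor
  · intro hb
    obtain ⟨x, hx⟩ := P.nonempty_of_mem_parts hb
    exact mem_image.2 ⟨x, mem_univ x, P.part_eq_of_mem hb hx⟩
  · intro hb
    obtain ⟨x, -, rfl⟩ := mem_image.1 hb
    exact P.part_mem.2 (mem_univ x)

def kr (g : Fin (M+1) → Fin (M+1)) : Setoid (Fin (M+1)) where
  r x y := g x = g y
  iseqv := ⟨fun _ => rfl, Eq.symm, Eq.trans⟩

instance (g : Fin (M+1) → Fin (M+1)) : DecidableRel (kr g).r :=
  fun x y => inferInstanceAs (Decidable (g x = g y))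

def toP (g : Fin (M+1) → Fin (M+1)) : Finpartition (univ : Finset (Fin (M+1))) :=
  Finpartition.ofSetoid (kr g)

lemma part_toP (g : Fin (M+1) → Fin (M+1)) (x : Fin (M+1)) :
    (toP g).part x = univ.filter fun y => g x = g y := by
  ext y
  rw [toP, Finpartition.mem_part_ofSetoid_iff_rel, mem_filter]
  exact ⟨fun h => ⟨mem_univ y, h⟩, fun h => h.2⟩

lemma card_parts_toP {a : Fin M → Fin 2} {g : Fin (M+1) → Fin (M+1)}
    (hg : g ∈ piFinset (tx a)) : (toP g).parts.card = ones a + 1 := by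
  rw [parts_eq_image_part]
  have h1 : univ.image (toP g).part
      = (univ.image g).image (fun r => univ.filter fun y => r = g y) := by
    rw [image_image]
    exact image_congr fun x _ => (part_toP g x)
  rw [h1, image_g_eq_Fx hg, ← card_Fx a]
  apply card_image_of_injOn
  intro r hr r' hr' hff
  have hff' : (univ.filter fun y => r = g y) = univ.filter fun y => r' = g y := hff
  have h2 : r = g r := (hfix hg (mem_coe.1 hr)).symm
  have hmem : r ∈ univ.filter fun y => r = g y := mem_filter.2 ⟨mem_univ _, h2⟩
  rw [hff'] at hmem
  have h3 : r' = g r := (mem_filter.1 hmem).2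
  rw [h3, ← h2]

def gOf (P : Finpartition (univ : Finset (Fin (M+1)))) (x : Fin (M+1)) : Fin (M+1) :=
  (P.part x).min' ⟨x, P.mem_part (mem_univ x)⟩

def aOf (P : Finpartition (univ : Finset (Fin (M+1)))) (j : Fin M) : Fin 2 :=
  if gOf P j.succ = j.succ then 1 else 0

lemma gOf_mem (P : Finpartition (univ : Finset (Fin (M+1)))) (x : Fin (M+1)) :
    gOf P x ∈ P.part x := min'_mem _ _

lemma gOf_le (P : Finpartition (univ : Finset (Fin (M+1)))) (x : Fin (M+1)) :
    gOf P x ≤ x := min'_le _ _ (P.mem_part (mem_univ x))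

lemma gOf_zero (P : Finpartition (univ : Finset (Fin (M+1)))) : gOf P 0 = 0 :=
  Fin.le_zero_iff.1 (gOf_le P 0)

lemma part_gOf (P : Finpartition (univ : Finset (Fin (M+1)))) (x : Fin (M+1)) :
    P.part (gOf P x) = P.part x :=
  P.part_eq_of_mem (P.part_mem.2 (mem_univ x)) (gOf_mem P x)

lemma gOf_idem (P : Finpartition (univ : Finset (Fin (M+1)))) (x : Fin (M+1)) :
    gOf P (gOf P x) = gOf P x :=
  min'_eq_of_eq _ _ (part_gOf P x) _ _

lemma gOf_eq_iff (P : Finpartition (univ : Finset (Fin (M+1)))) {x y : Fin (M+1)} :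
    gOf P x = gOf P y ↔ y ∈ P.part x := by
  constructor
  · intro h
    have h1 : gOf P x ∈ P.part x := gOf_mem P x
    have h2 : gOf P x ∈ P.part y := h ▸ gOf_mem P y
    have h3 := P.eq_of_mem_parts (P.part_mem.2 (mem_univ x)) (P.part_mem.2 (mem_univ y)) h1 h2
    exact h3 ▸ P.mem_part (mem_univ y)
  · intro hy
    have h1 : P.part y = P.part x := P.part_eq_of_mem (P.part_mem.2 (mem_univ x)) hy
    exact (min'_eq_of_eq _ _ h1.symm _ _)

lemma mem_Fx_aOf {P : Finpartition (univ : Finset (Fin (M+1)))} {x : Fin (M+1)} :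
    x ∈ Fx (aOf P) ↔ gOf P x = x := by
  rw [mem_Fx]
  constructor
  · rintro (rfl | ⟨j, hj, rfl⟩)
    · exact gOf_zero P
    · by_contra hne
      rw [aOf, if_neg hne] at hj
      exact absurd hj (by decide)
  · intro hx
    rcases eq_or_ne x 0 with rfl | h0
    · exact Or.inl rfl
    · refine Or.inr ⟨x.pred h0, ?_, Fin.succ_pred x h0⟩
      have hs : gOf P (x.pred h0).succ = (x.pred h0).succ := by
        rw [Fin.succ_pred]; exact hx
      rw [aOf, if_pos hs]

lemma card_fix_gOf (P : Finpartition (univ : Finset (Fin (M+1)))) :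
    (univ.filter fun x => gOf P x = x).card = P.parts.card := by
  apply card_bij (fun x _ => P.part x)
  · intro x _; exact P.part_mem.2 (mem_univ x)
  · intro x hx y hy hxy
    rw [mem_filter] at hx hy
    have h1 : gOf P x = gOf P y := min'_eq_of_eq _ _ hxy _ _
    rw [hx.2, hy.2] at h1
    exact h1
  · intro b hb
    obtain ⟨x, hx⟩ := P.nonempty_of_mem_parts hb
    have hpx : P.part x = b := P.part_eq_of_mem hb hx
    refine ⟨gOf P x, mem_filter.2 ⟨mem_univ _, gOf_idem P x⟩, ?_⟩
    rw [part_gOf, hpx]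

lemma ones_aOf {P : Finpartition (univ : Finset (Fin (M+1)))} {n : ℕ}
    (hP : P.parts.card = n + 1) : ones (aOf P) = n := by
  have h1 : Fx (aOf P) = univ.filter fun x => gOf P x = x := by
    ext x
    rw [mem_filter]
    exact ⟨fun hx => ⟨mem_univ _, mem_Fx_aOf.1 hx⟩, fun hx => mem_Fx_aOf.2 hx.2⟩
  have h2 : (Fx (aOf P)).card = n + 1 := by rw [h1, card_fix_gOf, hP]
  rw [card_Fx] at h2
  omega

lemma gOf_mem_piFinset (P : Finpartition (univ : Finset (Fin (M+1)))) :
    gOf P ∈ piFinset (tx (aOf P)) := by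
  rw [mem_piFinset]
  intro x
  by_cases hx : x ∈ Fx (aOf P)
  · rw [tx, if_pos hx, mem_singleton]
    exact mem_Fx_aOf.1 hx
  · rw [tx, if_neg hx]
    have hne : gOf P x ≠ x := fun hfx => hx (mem_Fx_aOf.2 hfx)
    have hlt : gOf P x < x := lt_of_le_of_ne (gOf_le P x) hne
    have hfixg : gOf P (gOf P x) = gOf P x := gOf_idem P x
    rcases eq_or_ne (gOf P x) 0 with h0 | h0
    · rw [h0]; exact mem_insert_self _ _
    · apply mem_insert_of_mem
      apply mem_image.2
      refine ⟨(gOf P x).pred h0, mem_filter.2 ⟨mem_univ _, ?_, ?_⟩, Fin.succ_pred _ h0⟩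
      · have hs : gOf P ((gOf P x).pred h0).succ = ((gOf P x).pred h0).succ := by
          rw [Fin.succ_pred]; exact hfixg
        rw [aOf, if_pos hs]
      · rw [Fin.succ_pred]; exact hlt

lemma gOf_toP {a : Fin M → Fin 2} {g : Fin (M+1) → Fin (M+1)}
    (hg : g ∈ piFinset (tx a)) : gOf (toP g) = g := by
  funext x
  refine le_antisymm (min'_le _ _ ?_) (le_min' _ _ _ ?_)
  · rw [part_toP, mem_filter]
    exact ⟨mem_univ _, (hfix hg (hgF hg x)).symm⟩
  · intro y hy
    rw [part_toP, mem_filter] at hy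
    exact le_trans (le_of_eq hy.2) (hgle hg y)

lemma aOf_toP {a : Fin M → Fin 2} {g : Fin (M+1) → Fin (M+1)}
    (hg : g ∈ piFinset (tx a)) : aOf (toP g) = a := by
  funext j
  rw [aOf, gOf_toP hg]
  rcases fin2 (a j) with hja | hja
  · rw [hja, if_neg]
    intro hfx
    have hmem : j.succ ∈ Fx a := (fix_iff_mem_Fx hg).1 hfx
    rcases mem_Fx.1 hmem with h0 | ⟨k, hk, hks⟩
    · exact Fin.succ_ne_zero j h0
    · have hkj : k = j := Fin.succ_injective M hks
      subst hkj
      rw [hja] at hk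
      exact absurd hk (by decide)
  · rw [hja, if_pos]
    exact hfix hg (mem_Fx.2 (Or.inr ⟨j, hja, rfl⟩))

lemma toP_gOf (P : Finpartition (univ : Finset (Fin (M+1)))) : toP (gOf P) = P := by
  apply Finpartition.ext
  rw [parts_eq_image_part (toP (gOf P)), parts_eq_image_part P]
  apply image_congr
  intro x _
  rw [part_toP]
  ext y
  rw [mem_filter]
  constructor
  · rintro ⟨-, hc⟩
    exact (gOf_eq_iff P).1 hc
  · intro hc
    exact ⟨mem_univ _, (gOf_eq_iff P).2 hc⟩

lemma weight_eq {a : Fin M → Fin 2} {g : Fin (M+1) → Fin (M+1)} {n : ℕ}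
    (hg : g ∈ piFinset (tx a)) (hones : ones a = n) (p : ℝ) (hp : p ≠ 0) :
    ∏ x, fw p x (g x)
      = p ^ (M - n) * (1/p) ^ (((toP g).part 0).card - 1) := by
  have hg0 : g 0 = 0 := hfix hg (zero_mem_Fx a)
  have hpart0 : (toP g).part 0 = univ.filter fun y => g y = 0 := by
    rw [part_toP]
    ext y
    rw [mem_filter, mem_filter, hg0]
    exact ⟨fun hh => ⟨hh.1, hh.2.symm⟩, fun hh => ⟨hh.1, hh.2.symm⟩⟩
  have hprod : ∏ x, fw p x (g x)
      = p ^ (univ.filter fun x => ¬(g x = 0 ∨ g x = x)).card := by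
    simp only [fw]
    rw [prod_ite (fun _ => (1:ℝ)) (fun _ => p), prod_const_one, one_mul, prod_const]
  have hFs : (univ.filter fun x => g x = x) = Fx a := by
    ext x
    rw [mem_filter]
    exact ⟨fun hx => (fix_iff_mem_Fx hg).1 hx.2, fun hx => ⟨mem_univ _, hfix hg hx⟩⟩
  have hcFs : (univ.filter fun x => g x = x).card = n + 1 := by
    rw [hFs, card_Fx, hones]
  have hBF : (univ.filter fun x => g x = 0) ∩ (univ.filter fun x => g x = x) = {0} := by
    ext x
    rw [mem_inter, mem_filter, mem_filter, mem_singleton]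
    constructor
    · rintro ⟨⟨-, h1⟩, ⟨-, h2⟩⟩
      rw [← h2, h1]
    · rintro rfl
      exact ⟨⟨mem_univ _, hg0⟩, ⟨mem_univ _, hg0⟩⟩
  have hor : (univ.filter fun x => g x = 0 ∨ g x = x)
      = (univ.filter fun x => g x = 0) ∪ (univ.filter fun x => g x = x) :=
    filter_or _ _ _
  have hcnt := card_filter_add_card_filter_not
    (s := (univ : Finset (Fin (M+1)))) (p := fun x => g x = 0 ∨ g x = x)
  have hcu := card_union_add_card_inter
    (univ.filter fun x => g x = 0) (univ.filter fun x => g x = x)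
  rw [hBF, card_singleton, hcFs] at hcu
  have hle : ((univ.filter fun x => g x = 0) ∪ (univ.filter fun x => g x = x)).card ≤ M + 1 := by
    refine le_trans (card_le_card (subset_univ _)) ?_
    simp
  have hB1 : 1 ≤ (univ.filter fun x => g x = 0).card := by
    refine card_pos.2 ⟨0, ?_⟩
    rw [mem_filter]
    exact ⟨mem_univ _, hg0⟩
  rw [card_univ, Fintype.card_fin, hor] at hcnt
  rw [hprod, hpart0]
  have harith : M - n = (univ.filter fun x => ¬(g x = 0 ∨ g x = x)).card
      + ((univ.filter fun x => g x = 0).card - 1) := by omega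
  rw [harith, pow_add, one_div, inv_pow, mul_assoc,
    mul_inv_cancel₀ (pow_ne_zero _ hp), mul_one]

end RQZ

/-- at `q = 0` the restricted partition function is expressed via the
`1/p`-weighted Stirling numbers. -/
theorem R_q_zero (L n : ℕ) (h : n < L) (p : ℝ) (hp : p ≠ 0) :
    R L n p 0 = p ^ (L - n - 1) * pStirling (1 / p) L (n + 1) := by
  obtain ⟨M, rfl⟩ : ∃ M, L = M + 1 := ⟨L - 1, by omega⟩
  have hLn : M + 1 - n - 1 = M - n := by omega
  rw [hLn, pStirling, dif_pos (Nat.succ_pos M)]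
  have h00 : (⟨0, Nat.succ_pos M⟩ : Fin (M+1)) = 0 := by simp [Fin.ext_iff]
  rw [h00, mul_sum, R]
  show (∑ a ∈ Finset.filter (fun a : Fin M → Fin 2 => ones a = n) Finset.univ, wt p 0 a) = _
  rw [Finset.sum_congr rfl (fun a _ => RQZ.wt_expand p a), Finset.sum_sigma']
  refine Finset.sum_nbij' (fun s => RQZ.toP s.2) (fun P => ⟨RQZ.aOf P, RQZ.gOf P⟩)
    ?_ ?_ ?_ ?_ ?_
  · rintro ⟨a, g⟩ hx
    rw [mem_sigma, mem_filter] at hx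
    rw [mem_filter]
    exact ⟨mem_univ _, by rw [RQZ.card_parts_toP hx.2, hx.1.2]⟩
  · intro P hP
    rw [mem_filter] at hP
    rw [mem_sigma, mem_filter]
    exact ⟨⟨mem_univ _, RQZ.ones_aOf hP.2⟩, RQZ.gOf_mem_piFinset P⟩
  · rintro ⟨a, g⟩ hx
    rw [mem_sigma, mem_filter] at hx
    exact Sigma.ext (RQZ.aOf_toP hx.2) (heq_of_eq (RQZ.gOf_toP hx.2))
  · intro P _
    exact RQZ.toP_gOf P
  · rintro ⟨a, g⟩ hx
    rw [mem_sigma, mem_filter] at hx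
    exact RQZ.weight_eq hx.2 hx.1.2 p hp
end

section
/- Let L ≥ 2 and 0 ≤ n ≤ L−2 be integers and let p, q be real parameters. Then ∑_{a} ( p·w_{p,q}((0) ++ a) − q·w_{p,q}(a ++ (0)) ) = (p − q) · R(L−1, n; p, q), where the sum runs over all words a of length L−2 with entries in {0,1} having exactly n ones, and (0) ++ a (resp. a ++ (0)) denotes the word obtained by prepending (resp. appending) a single 0 to a. (This identity says that the stationary current of the tracer particle equals (p−q)·R(L−1,n;p,q)/Z_{L,n}, where Z_{L,n} = L·R(L,n;p,q).) -/
open Finset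

lemma wt_cast (p q : ℝ) {m m' : ℕ} (h : m = m') (a : Fin m' → Fin 2) :
    wt p q (a ∘ Fin.cast h) = wt p q a := by
  subst h
  have : Fin.cast rfl = (id : Fin m → Fin m) := by ext i; rfl
  simp [this]

lemma wt_cons (p q : ℝ) {m : ℕ} (a : Fin m → Fin 2) :
    wt p q (Fin.cons (0 : Fin 2) a) = (1 + q * ones a) * wt p q a := by
  have h01 : (0 : Fin 2) ≠ 1 := by decide
  unfold wt ones
  rw [Finset.prod_filter, Finset.prod_filter, Fin.prod_univ_succ]
  congr 1
  · simp [-Finset.sum_boole, Finset.card_filter, Fin.sum_univ_succ, Fin.succ_pos, h01]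
  · apply Finset.prod_congr rfl
    intro i _
    by_cases hai : a i = 0
    · simp only [Fin.cons_succ, hai, if_pos]
      simp [-Finset.sum_boole, Finset.card_filter, Fin.sum_univ_succ, Fin.succ_lt_succ_iff, h01,
        Fin.not_lt_zero]
    · simp [Fin.cons_succ, hai]

lemma wt_snoc (p q : ℝ) {m : ℕ} (a : Fin m → Fin 2) :
    wt p q (Fin.snoc a (0 : Fin 2)) = (1 + p * ones a) * wt p q a := by
  have h01 : (0 : Fin 2) ≠ 1 := by decide
  have hlast : ∀ j : Fin m, ¬ (Fin.last m < j.castSucc) :=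
    fun j => (Fin.castSucc_lt_last j).asymm
  unfold wt ones
  rw [Finset.prod_filter, Finset.prod_filter, Fin.prod_univ_castSucc, mul_comm]
  congr 1
  · simp [-Finset.sum_boole, Finset.card_filter, Fin.sum_univ_castSucc, Fin.castSucc_lt_last, h01, hlast]
  · apply Finset.prod_congr rfl
    intro i _
    by_cases hai : a i = 0
    · simp only [Fin.snoc_castSucc, hai, if_pos]
      simp [-Finset.sum_boole, Finset.card_filter, Fin.sum_univ_castSucc, Fin.castSucc_lt_castSucc_iff,
        h01, hlast i, fun j => hlast j]
    · simp [Fin.snoc_castSucc, hai]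

/-- the identity giving the stationary current of the tracer particle. -/
theorem tracer_current (L n : ℕ) (hL : 2 ≤ L) (hn : n ≤ L - 2) (p q : ℝ) :
    (∑ a ∈ univ.filter (fun a : Fin (L - 2) → Fin 2 => ones a = n),
       (p * wt p q (Fin.append ![(0 : Fin 2)] a)
         - q * wt p q (Fin.append a ![(0 : Fin 2)])))
    = (p - q) * R (L - 1) n p q := by
  have hR : R (L - 1) n p q
      = ∑ a ∈ univ.filter (fun a : Fin (L - 2) → Fin 2 => ones a = n), wt p q a := by
    unfold R
    have h : L - 1 - 1 = L - 2 := by omega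
    rfl
  rw [hR, Finset.mul_sum]
  apply Finset.sum_congr rfl
  intro a ha
  rw [Finset.mem_filter] at ha
  have hones : ones a = n := ha.2
  have h1 : wt p q (Fin.append ![(0 : Fin 2)] a) = (1 + q * n) * wt p q a := by
    rw [Fin.append_left_eq_cons]
    have := wt_cast p q (Nat.add_comm 1 (L-2)) (Fin.cons ((![(0:Fin 2)]) 0) a)
    rw [this]
    simp only [Matrix.cons_val_zero]
    rw [wt_cons, hones]
  have h2 : wt p q (Fin.append a ![(0 : Fin 2)]) = (1 + p * n) * wt p q a := by
    rw [Fin.append_right_eq_snoc]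
    simp only [Matrix.cons_val_zero]
    rw [wt_snoc, hones]
  rw [h1, h2]
  ring
end

section
/- Let L ≥ 3 and 1 ≤ n ≤ L−2 be integers and let p, q be real parameters. Then ∑_{k=1}^{L−2} ( ∑_{a : a_k = 1, a_{k+1} = 0} w_{p,q}(a) − ∑_{a : a_k = 0, a_{k+1} = 1} w_{p,q}(a) ) = (p − q) · n · R(L−1, n; p, q), where the inner sums run over words a of length L−1 with entries in {0,1} having exactly n ones and the prescribed values at positions k and k+1. (This identity says that the stationary current of ordinary particles equals (p−q)·n·R(L−1,n;p,q)/Z_{L,n}, where Z_{L,n} = L·R(L,n;p,q).) -/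
open Finset

/- ### Auxiliary definitions and lemmas -/

/-- Insert a `0` at position `j`. -/
def insZ {m : ℕ} (j : Fin (m + 1)) (b : Fin m → Fin 2) : Fin (m + 1) → Fin 2 :=
  j.insertNth 0 b

@[simp] lemma insZ_same {m : ℕ} (j : Fin (m + 1)) (b : Fin m → Fin 2) :
    insZ j b j = 0 :=
  @Fin.insertNth_apply_same m (fun _ => Fin 2) j 0 b

@[simp] lemma insZ_succAbove {m : ℕ} (j : Fin (m + 1)) (b : Fin m → Fin 2) (i : Fin m) :
    insZ j b (j.succAbove i) = b i :=
  @Fin.insertNth_apply_succAbove m (fun _ => Fin 2) j 0 b i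

lemma removeNth_insZ {m : ℕ} (j : Fin (m + 1)) (b : Fin m → Fin 2) :
    j.removeNth (insZ j b) = b :=
  @Fin.removeNth_insertNth m (fun _ => Fin 2) j 0 b

lemma insZ_removeNth {m : ℕ} (j : Fin (m + 1)) (a : Fin (m + 1) → Fin 2) (ha : a j = 0) :
    insZ j (j.removeNth a) = a := by
  have h := Fin.insertNth_self_removeNth j a
  rw [ha] at h
  exact h

lemma filter_not_at {m : ℕ} (j : Fin (m + 1)) (P : Fin (m + 1) → Prop) [DecidablePred P]
    (hj : ¬ P j) :
    univ.filter P = (univ.filter (fun i => P (j.succAbove i))).image j.succAbove := by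
  ext x
  simp only [mem_filter, mem_image, mem_univ, true_and]
  constructor
  · intro hx
    have hxj : x ≠ j := fun h => hj (h ▸ hx)
    obtain ⟨i, hi⟩ := Fin.exists_succAbove_eq hxj
    refine ⟨i, ?_, hi⟩
    rw [hi]; exact hx
  · rintro ⟨i, hi, rfl⟩; exact hi

lemma card_filter_not_at {m : ℕ} (j : Fin (m + 1)) (P : Fin (m + 1) → Prop) [DecidablePred P]
    (hj : ¬ P j) :
    (univ.filter P).card = (univ.filter (fun i => P (j.succAbove i))).card := by
  rw [filter_not_at j P hj, card_image_of_injective _ Fin.succAbove_right_injective]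

lemma ones_insZ {m : ℕ} (j : Fin (m + 1)) (b : Fin m → Fin 2) :
    ones (insZ j b) = ones b := by
  unfold ones
  rw [card_filter_not_at j (fun i => insZ j b i = 1) (by simp)]
  simp

lemma mcnt_insZ {m : ℕ} (j : Fin (m + 1)) (b : Fin m → Fin 2) (i : Fin m) :
    (univ.filter (fun l => l < j.succAbove i ∧ insZ j b l = 1)).card
      = (univ.filter (fun l => l < i ∧ b l = 1)).card := by
  rw [card_filter_not_at j (fun l => l < j.succAbove i ∧ insZ j b l = 1)
    (by simp [Fin.succAbove_ne])]
  congr 1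
  apply filter_congr
  intro l _
  simp [Fin.succAbove_lt_succAbove_iff]

lemma ncnt_insZ {m : ℕ} (j : Fin (m + 1)) (b : Fin m → Fin 2) (i : Fin m) :
    (univ.filter (fun l => j.succAbove i < l ∧ insZ j b l = 1)).card
      = (univ.filter (fun l => i < l ∧ b l = 1)).card := by
  rw [card_filter_not_at j (fun l => j.succAbove i < l ∧ insZ j b l = 1)
    (by simp [Fin.ne_succAbove])]
  congr 1
  apply filter_congr
  intro l _
  simp [Fin.succAbove_lt_succAbove_iff]

lemma wt_insZ {m : ℕ} (p q : ℝ) (j : Fin (m + 1)) (b : Fin m → Fin 2) :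
    wt p q (insZ j b)
      = (1 + p * ((univ.filter (fun i => j.succAbove i < j ∧ b i = 1)).card : ℝ)
           + q * ((univ.filter (fun i => j < j.succAbove i ∧ b i = 1)).card : ℝ))
        * wt p q b := by
  unfold wt
  have hz : univ.filter (fun i => insZ j b i = 0)
      = insert j ((univ.filter (fun i => b i = 0)).image j.succAbove) := by
    ext x
    simp only [mem_filter, mem_insert, mem_image, mem_univ, true_and]
    constructor
    · intro hx
      by_cases hxj : x = j
      · exact Or.inl hxj
      · obtain ⟨i, hi⟩ := Fin.exists_succAbove_eq hxj
        exact Or.inr ⟨i, by rw [← hi] at hx; simpa using hx, hi⟩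
    · rintro (rfl | ⟨i, hi, rfl⟩)
      · simp
      · simpa using hi
  have hjni : j ∉ (univ.filter (fun i => b i = 0)).image j.succAbove := by
    simp only [mem_image, mem_filter, mem_univ, true_and, not_exists]
    rintro i ⟨_, hi⟩
    exact Fin.succAbove_ne j i hi
  rw [hz, prod_insert hjni,
    prod_image (fun x _ y _ h => Fin.succAbove_right_injective h)]
  have h1 : (univ.filter (fun l => l < j ∧ insZ j b l = 1)).card
      = (univ.filter (fun i => j.succAbove i < j ∧ b i = 1)).card := by
    rw [card_filter_not_at j (fun l => l < j ∧ insZ j b l = 1) (by simp)]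
    simp
  have h2 : (univ.filter (fun l => j < l ∧ insZ j b l = 1)).card
      = (univ.filter (fun i => j < j.succAbove i ∧ b i = 1)).card := by
    rw [card_filter_not_at j (fun l => j < l ∧ insZ j b l = 1) (by simp)]
    simp
  rw [h1, h2]
  congr 1
  apply prod_congr rfl
  intro i hi
  rw [mcnt_insZ, ncnt_insZ]

/-- Summation over words of length `m+1` with a prescribed `0` at position `j`
equals summation over words of length `m` (via deletion of position `j`). -/
lemma sum_ins {m : ℕ} (p q : ℝ) (j : Fin (m + 1)) (P : (Fin (m + 1) → Fin 2) → Prop)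
    [DecidablePred P] (Q : (Fin m → Fin 2) → Prop) [DecidablePred Q]
    (hPQ : ∀ b : Fin m → Fin 2, P (insZ j b) ↔ Q b)
    (hP0 : ∀ a, P a → a j = 0) :
    ∑ a ∈ univ.filter P, wt p q a = ∑ b ∈ univ.filter Q, wt p q (insZ j b) := by
  refine Finset.sum_nbij' (fun a => j.removeNth a) (fun b => insZ j b)
    ?_ ?_ ?_ ?_ ?_
  · intro a ha
    simp only [mem_filter, mem_univ, true_and] at ha ⊢
    rw [← hPQ, insZ_removeNth j a (hP0 a ha)]; exact ha
  · intro b hb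
    simp only [mem_filter, mem_univ, true_and] at hb ⊢
    rw [hPQ]; exact hb
  · intro a ha
    simp only [mem_filter, mem_univ, true_and] at ha
    exact insZ_removeNth j a (hP0 a ha)
  · intro b _
    exact removeNth_insZ j b
  · intro a ha
    simp only [mem_filter, mem_univ, true_and] at ha
    rw [insZ_removeNth j a (hP0 a ha)]

lemma card_le_split {m : ℕ} (b : Fin m → Fin 2) (k : Fin m) (hk : b k = 1) :
    (univ.filter (fun i => i ≤ k ∧ b i = 1)).card
      = (univ.filter (fun i => i < k ∧ b i = 1)).card + 1 := by
  have h : univ.filter (fun i => i ≤ k ∧ b i = 1)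
      = insert k (univ.filter (fun i => i < k ∧ b i = 1)) := by
    ext i
    simp only [mem_filter, mem_insert, mem_univ, true_and]
    constructor
    · rintro ⟨hle, h1⟩
      rcases eq_or_lt_of_le hle with h | hlt
      · exact Or.inl h
      · exact Or.inr ⟨hlt, h1⟩
    · rintro (rfl | ⟨hlt, h1⟩)
      · exact ⟨le_refl _, hk⟩
      · exact ⟨le_of_lt hlt, h1⟩
  rw [h, card_insert_of_notMem (by simp)]

lemma card_ge_split {m : ℕ} (b : Fin m → Fin 2) (k : Fin m) (hk : b k = 1) :
    (univ.filter (fun i => k ≤ i ∧ b i = 1)).card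
      = (univ.filter (fun i => k < i ∧ b i = 1)).card + 1 := by
  have h : univ.filter (fun i => k ≤ i ∧ b i = 1)
      = insert k (univ.filter (fun i => k < i ∧ b i = 1)) := by
    ext i
    simp only [mem_filter, mem_insert, mem_univ, true_and]
    constructor
    · rintro ⟨hle, h1⟩
      rcases eq_or_lt_of_le hle with h | hlt
      · exact Or.inl h.symm
      · exact Or.inr ⟨hlt, h1⟩
    · rintro (rfl | ⟨hlt, h1⟩)
      · exact ⟨le_refl _, hk⟩
      · exact ⟨le_of_lt hlt, h1⟩
  rw [h, card_insert_of_notMem (by simp)]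

/-- The key per-pair identity. -/
lemma key_identity (m n : ℕ) (p q : ℝ) (k : Fin (m + 1)) :
    (∑ a ∈ univ.filter (fun a : Fin (m + 2) → Fin 2 =>
        ones a = n ∧ a k.castSucc = 1 ∧ a k.succ = 0), wt p q a)
    - (∑ a ∈ univ.filter (fun a : Fin (m + 2) → Fin 2 =>
        ones a = n ∧ a k.castSucc = 0 ∧ a k.succ = 1), wt p q a)
    = (p - q) * ∑ b ∈ univ.filter (fun b : Fin (m + 1) → Fin 2 =>
        ones b = n ∧ b k = 1), wt p q b := by
  have h10 : (∑ a ∈ univ.filter (fun a : Fin (m + 2) → Fin 2 =>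
        ones a = n ∧ a k.castSucc = 1 ∧ a k.succ = 0), wt p q a)
      = ∑ b ∈ univ.filter (fun b : Fin (m + 1) → Fin 2 => ones b = n ∧ b k = 1),
          wt p q (insZ k.succ b) := by
    apply sum_ins
    · intro b
      rw [ones_insZ]
      have hcs : insZ k.succ b k.castSucc = b k := by
        rw [← Fin.succAbove_succ_self k]; exact insZ_succAbove k.succ b k
      rw [hcs]
      simp
    · rintro a ⟨-, -, h⟩; exact h
  have h01 : (∑ a ∈ univ.filter (fun a : Fin (m + 2) → Fin 2 =>
        ones a = n ∧ a k.castSucc = 0 ∧ a k.succ = 1), wt p q a)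
      = ∑ b ∈ univ.filter (fun b : Fin (m + 1) → Fin 2 => ones b = n ∧ b k = 1),
          wt p q (insZ k.castSucc b) := by
    apply sum_ins
    · intro b
      rw [ones_insZ]
      have hcs : insZ k.castSucc b k.succ = b k := by
        rw [← Fin.succAbove_castSucc_self k]; exact insZ_succAbove k.castSucc b k
      rw [hcs]
      simp [and_comm]
    · rintro a ⟨-, h, -⟩; exact h
  rw [h10, h01, ← sum_sub_distrib, mul_sum]
  apply sum_congr rfl
  intro b hb
  simp only [mem_filter, mem_univ, true_and] at hb
  obtain ⟨-, hbk⟩ := hb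
  rw [wt_insZ, wt_insZ]
  have e1 : univ.filter (fun i => (k.succ).succAbove i < k.succ ∧ b i = 1)
      = univ.filter (fun i => i ≤ k ∧ b i = 1) := by
    apply filter_congr; intro i _
    simp [Fin.succAbove_lt_iff_castSucc_lt]
  have e2 : univ.filter (fun i => k.succ < (k.succ).succAbove i ∧ b i = 1)
      = univ.filter (fun i => k < i ∧ b i = 1) := by
    apply filter_congr; intro i _
    simp [Fin.lt_succAbove_iff_le_castSucc]
  have e3 : univ.filter (fun i => (k.castSucc).succAbove i < k.castSucc ∧ b i = 1)
      = univ.filter (fun i => i < k ∧ b i = 1) := by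
    apply filter_congr; intro i _
    simp [Fin.succAbove_lt_iff_castSucc_lt, Fin.castSucc_lt_castSucc_iff]
  have e4 : univ.filter (fun i => k.castSucc < (k.castSucc).succAbove i ∧ b i = 1)
      = univ.filter (fun i => k ≤ i ∧ b i = 1) := by
    apply filter_congr; intro i _
    simp [Fin.lt_succAbove_iff_le_castSucc, Fin.castSucc_le_castSucc_iff]
  rw [e1, e2, e3, e4, card_le_split b k hbk, card_ge_split b k hbk]
  push_cast
  ring

/-- the identity giving the stationary current of ordinary particles:
summing the correlation identity over the `L - 2` neighbouring pairs of positions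
(pair `k` runs over positions `(k+1, k+2)`, i.e. word indices `(k, k+1)`). -/
theorem particle_current (L n : ℕ) (hL : 3 ≤ L) (hn1 : 1 ≤ n) (hn2 : n ≤ L - 2) (p q : ℝ) :
    (∑ k : Fin (L - 2),
      ((∑ a ∈ univ.filter (fun a : Fin (L - 1) → Fin 2 =>
          ones a = n ∧ a ⟨k.1, by have := k.isLt; omega⟩ = 1
            ∧ a ⟨k.1 + 1, by have := k.isLt; omega⟩ = 0), wt p q a)
       - ∑ a ∈ univ.filter (fun a : Fin (L - 1) → Fin 2 =>
          ones a = n ∧ a ⟨k.1, by have := k.isLt; omega⟩ = 0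
            ∧ a ⟨k.1 + 1, by have := k.isLt; omega⟩ = 1), wt p q a))
    = (p - q) * (n : ℝ) * R (L - 1) n p q := by
  obtain ⟨m, rfl⟩ : ∃ m, L = m + 3 := ⟨L - 3, by omega⟩
  show (∑ k : Fin (m + 1),
      ((∑ a ∈ univ.filter (fun a : Fin (m + 2) → Fin 2 =>
          ones a = n ∧ a ⟨k.1, by omega⟩ = 1 ∧ a ⟨k.1 + 1, by omega⟩ = 0), wt p q a)
       - ∑ a ∈ univ.filter (fun a : Fin (m + 2) → Fin 2 =>
          ones a = n ∧ a ⟨k.1, by omega⟩ = 0 ∧ a ⟨k.1 + 1, by omega⟩ = 1), wt p q a))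
    = (p - q) * (n : ℝ) * R (m + 2) n p q
  have hR : R (m + 2) n p q
      = ∑ b ∈ univ.filter (fun b : Fin (m + 1) → Fin 2 => ones b = n), wt p q b := rfl
  have step : ∀ k : Fin (m + 1),
      ((∑ a ∈ univ.filter (fun a : Fin (m + 2) → Fin 2 =>
          ones a = n ∧ a ⟨k.1, by omega⟩ = 1 ∧ a ⟨k.1 + 1, by omega⟩ = 0), wt p q a)
       - ∑ a ∈ univ.filter (fun a : Fin (m + 2) → Fin 2 =>
          ones a = n ∧ a ⟨k.1, by omega⟩ = 0 ∧ a ⟨k.1 + 1, by omega⟩ = 1), wt p q a)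
      = (p - q) * ∑ b ∈ univ.filter (fun b : Fin (m + 1) → Fin 2 =>
          ones b = n ∧ b k = 1), wt p q b := by
    intro k
    have h1 : (⟨k.1, by omega⟩ : Fin (m + 2)) = k.castSucc := rfl
    have h2 : (⟨k.1 + 1, by omega⟩ : Fin (m + 2)) = k.succ := rfl
    rw [h1, h2]
    exact key_identity m n p q k
  rw [Finset.sum_congr rfl (fun k _ => step k), ← mul_sum]
  have swap : (∑ k : Fin (m + 1),
      ∑ b ∈ univ.filter (fun b : Fin (m + 1) → Fin 2 => ones b = n ∧ b k = 1), wt p q b)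
      = (n : ℝ) * ∑ b ∈ univ.filter (fun b : Fin (m + 1) → Fin 2 => ones b = n), wt p q b := by
    have h : ∀ k : Fin (m + 1),
        (∑ b ∈ univ.filter (fun b : Fin (m + 1) → Fin 2 => ones b = n ∧ b k = 1), wt p q b)
        = ∑ b ∈ univ.filter (fun b : Fin (m + 1) → Fin 2 => ones b = n),
            (if b k = 1 then wt p q b else 0) := by
      intro k
      rw [← sum_filter, filter_filter]
    rw [Finset.sum_congr rfl (fun k _ => h k), Finset.sum_comm, mul_sum]
    apply sum_congr rfl
    intro b hb
    simp only [mem_filter, mem_univ, true_and] at hb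
    rw [← sum_filter, sum_const, nsmul_eq_mul]
    congr 1
    rw [show (univ.filter (fun k => b k = 1)).card = ones b from rfl, hb]
  rw [swap, hR]
  ring
end
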